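/- arXiv:2509.25553 — 6 statements merged into one kernel-verified Lean document; each statement's English description precedes it below -/
import Mathlib

section
/- Let U ⊆ ℝ² be open, let λ : ℝ → ℝ satisfy λ(y) ≠ 0 for all (x,y) ∈ U, and let w : ℝ² → ℝ be three times continuously differentiable on U satisfying w_xx·w_yy − (w_xy)² = −λ(y)² on U. Define the vector field v = (−w_xy·w_yy/(2λ(y)²), 1). Then at every point of U, the directional derivative of w_xx along v satisfies v·∇(w_xx) = ((w_xy·w_xyy − 2·w_yy·w_xxy)/(2λ(y)²))·w_xx; that is, −(w_xy·w_yy/(2λ(y)²))·w_xxx + w_xxy = ((w_xy·w_xyy − 2·w_yy·w_xxy)/(2λ(y)²))·w_xx. -/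
/-- Partial derivative with respect to the first variable. -/
noncomputable def pd1 (f : ℝ → ℝ → ℝ) (x y : ℝ) : ℝ := deriv (fun x' => f x' y) x

/-- Partial derivative with respect to the second variable. -/
noncomputable def pd2 (f : ℝ → ℝ → ℝ) (x y : ℝ) : ℝ := deriv (fun y' => f x y') y

open Filter Topology

lemma hasDerivAt_slice1 {G : ℝ × ℝ → ℝ} {p : ℝ × ℝ} (hG : DifferentiableAt ℝ G p) :
    HasDerivAt (fun t => G (t, p.2)) (fderiv ℝ G p (1, 0)) p.1 := by
  have hline : HasDerivAt (fun t : ℝ => ((t, p.2) : ℝ × ℝ)) (((1:ℝ), (0:ℝ))) p.1 :=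
    (hasDerivAt_id p.1).prodMk (hasDerivAt_const _ _)
  have := hG.hasFDerivAt.comp_hasDerivAt p.1 hline
  exact this

lemma hasDerivAt_slice2 {G : ℝ × ℝ → ℝ} {p : ℝ × ℝ} (hG : DifferentiableAt ℝ G p) :
    HasDerivAt (fun t => G (p.1, t)) (fderiv ℝ G p (0, 1)) p.2 := by
  have hline : HasDerivAt (fun t : ℝ => ((p.1, t) : ℝ × ℝ)) (((0:ℝ), (1:ℝ))) p.2 :=
    (hasDerivAt_const _ _).prodMk (hasDerivAt_id p.2)
  have := hG.hasFDerivAt.comp_hasDerivAt p.2 hline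
  exact this

lemma mem_slice1 {U : Set (ℝ × ℝ)} (hU : IsOpen U) {p : ℝ × ℝ} (hp : p ∈ U) :
    ∀ᶠ t in 𝓝 p.1, ((t, p.2) : ℝ × ℝ) ∈ U := by
  have hc : ContinuousAt (fun t : ℝ => ((t, p.2) : ℝ × ℝ)) p.1 := by fun_prop
  exact hc.preimage_mem_nhds (hU.mem_nhds hp)

lemma mem_slice2 {U : Set (ℝ × ℝ)} (hU : IsOpen U) {p : ℝ × ℝ} (hp : p ∈ U) :
    ∀ᶠ t in 𝓝 p.2, ((p.1, t) : ℝ × ℝ) ∈ U := by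
  have hc : ContinuousAt (fun t : ℝ => ((p.1, t) : ℝ × ℝ)) p.2 := by fun_prop
  exact hc.preimage_mem_nhds (hU.mem_nhds hp)

lemma pd1_eq {U : Set (ℝ × ℝ)} (hU : IsOpen U) {g : ℝ → ℝ → ℝ} {G : ℝ × ℝ → ℝ}
    (hgG : ∀ q ∈ U, g q.1 q.2 = G q) (hG : ∀ q ∈ U, DifferentiableAt ℝ G q)
    {p : ℝ × ℝ} (hp : p ∈ U) :
    pd1 g p.1 p.2 = fderiv ℝ G p (1, 0) := by
  have heq : (fun t => g t p.2) =ᶠ[𝓝 p.1] fun t => G (t, p.2) := by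
    filter_upwards [mem_slice1 hU hp] with t ht using hgG (t, p.2) ht
  show deriv (fun t => g t p.2) p.1 = _
  rw [heq.deriv_eq]
  exact (hasDerivAt_slice1 (hG p hp)).deriv

lemma pd2_eq {U : Set (ℝ × ℝ)} (hU : IsOpen U) {g : ℝ → ℝ → ℝ} {G : ℝ × ℝ → ℝ}
    (hgG : ∀ q ∈ U, g q.1 q.2 = G q) (hG : ∀ q ∈ U, DifferentiableAt ℝ G q)
    {p : ℝ × ℝ} (hp : p ∈ U) :
    pd2 g p.1 p.2 = fderiv ℝ G p (0, 1) := by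
  have heq : (fun t => g p.1 t) =ᶠ[𝓝 p.2] fun t => G (p.1, t) := by
    filter_upwards [mem_slice2 hU hp] with t ht using hgG (p.1, t) ht
  show deriv (fun t => g p.1 t) p.2 = _
  rw [heq.deriv_eq]
  exact (hasDerivAt_slice2 (hG p hp)).deriv

lemma hasFDerivAt_apply_const {E G : Type*} [NormedAddCommGroup E] [NormedSpace ℝ E]
    [NormedAddCommGroup G] [NormedSpace ℝ G]
    {Φ : E → E →L[ℝ] G} {Φ' : E →L[ℝ] E →L[ℝ] G} {p : E} (h : HasFDerivAt Φ Φ' p) (v : E) :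
    HasFDerivAt (fun q => Φ q v) (Φ'.flip v) p := by
  have := h.clm_apply (hasFDerivAt_const v p)
  simpa using this

lemma hasFDerivAt_apply2 {E : Type*} [NormedAddCommGroup E] [NormedSpace ℝ E]
    {B : E → E →L[ℝ] E →L[ℝ] ℝ} {C : E →L[ℝ] E →L[ℝ] E →L[ℝ] ℝ} {p : E}
    (h : HasFDerivAt B C p) (v u : E) :
    HasFDerivAt (fun q => B q v u) ((C.flip v).flip u) p :=
  hasFDerivAt_apply_const (hasFDerivAt_apply_const h v) u

set_option maxHeartbeats 2000000 in
/-- If `w` is `C³` on an open set `U`, `λ(y) ≠ 0` on `U`, and `w`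
satisfies the hyperbolic Monge–Ampère equation on `U`, then the directional
derivative of `w_xx` along the vector field
`v = (−w_xy·w_yy/(2λ(y)²), 1)` satisfies the transport law
`v·∇(w_xx) = ((w_xy·w_xyy − 2·w_yy·w_xxy)/(2λ(y)²))·w_xx`. -/
theorem monge_ampere_curvature_transport
    (U : Set (ℝ × ℝ)) (hU : IsOpen U) (w : ℝ → ℝ → ℝ) (lam : ℝ → ℝ)
    (hlam : ∀ p ∈ U, lam (Prod.snd p) ≠ 0)
    (hw : ContDiffOn ℝ 3 (fun p : ℝ × ℝ => w p.1 p.2) U)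
    (hMA : ∀ p ∈ U,
      pd1 (pd1 w) p.1 p.2 * pd2 (pd2 w) p.1 p.2
        - (pd2 (pd1 w) p.1 p.2) ^ 2 = -(lam p.2) ^ 2) :
    ∀ p ∈ U,
      -(pd2 (pd1 w) p.1 p.2 * pd2 (pd2 w) p.1 p.2 / (2 * (lam p.2) ^ 2))
          * pd1 (pd1 (pd1 w)) p.1 p.2
        + pd2 (pd1 (pd1 w)) p.1 p.2
      = ((pd2 (pd1 w) p.1 p.2 * pd2 (pd2 (pd1 w)) p.1 p.2
          - 2 * pd2 (pd2 w) p.1 p.2 * pd2 (pd1 (pd1 w)) p.1 p.2)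
          / (2 * (lam p.2) ^ 2)) * pd1 (pd1 w) p.1 p.2 := by
  intro p hp
  set F : ℝ × ℝ → ℝ := fun q : ℝ × ℝ => w q.1 q.2 with hFdef
  set F' : ℝ × ℝ → (ℝ × ℝ) →L[ℝ] ℝ := fderiv ℝ F with hF'def
  set B : ℝ × ℝ → (ℝ × ℝ) →L[ℝ] (ℝ × ℝ) →L[ℝ] ℝ := fderiv ℝ F' with hBdef
  have hw' : ContDiffOn ℝ 3 F U := hw
  have hF'on : ContDiffOn ℝ 2 F' U := hw'.fderiv_of_isOpen hU (by norm_num)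
  have hBon : ContDiffOn ℝ 1 B U := hF'on.fderiv_of_isOpen hU (by norm_num)
  have hFd : ∀ q ∈ U, DifferentiableAt ℝ F q := fun q hq =>
    (hw'.contDiffAt (hU.mem_nhds hq)).differentiableAt (by norm_num)
  have hF'd : ∀ q ∈ U, DifferentiableAt ℝ F' q := fun q hq =>
    (hF'on.contDiffAt (hU.mem_nhds hq)).differentiableAt (by norm_num)
  have hBd : ∀ q ∈ U, DifferentiableAt ℝ B q := fun q hq =>
    (hBon.contDiffAt (hU.mem_nhds hq)).differentiableAt (by norm_num)
  -- level 1
  have h1 : ∀ q ∈ U, pd1 w q.1 q.2 = F' q ((1:ℝ), (0:ℝ)) := fun q hq =>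
    pd1_eq hU (fun _ _ => rfl) hFd hq
  -- level 2
  have hA1 : ∀ q ∈ U, DifferentiableAt ℝ (fun r => F' r ((1:ℝ), (0:ℝ))) q := fun q hq =>
    (hasFDerivAt_apply_const (hF'd q hq).hasFDerivAt _).differentiableAt
  have h11 : ∀ q ∈ U, pd1 (pd1 w) q.1 q.2 = B q ((1:ℝ),(0:ℝ)) ((1:ℝ),(0:ℝ)) := by
    intro q hq
    rw [pd1_eq hU h1 hA1 hq,
      (hasFDerivAt_apply_const (hF'd q hq).hasFDerivAt ((1:ℝ),(0:ℝ))).fderiv]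
    simp
    rfl
  have h21 : ∀ q ∈ U, pd2 (pd1 w) q.1 q.2 = B q ((0:ℝ),(1:ℝ)) ((1:ℝ),(0:ℝ)) := by
    intro q hq
    rw [pd2_eq hU h1 hA1 hq,
      (hasFDerivAt_apply_const (hF'd q hq).hasFDerivAt ((1:ℝ),(0:ℝ))).fderiv]
    simp
    rfl
  have h2 : ∀ q ∈ U, pd2 w q.1 q.2 = F' q ((0:ℝ), (1:ℝ)) := fun q hq =>
    pd2_eq hU (fun _ _ => rfl) hFd hq
  have hA2 : ∀ q ∈ U, DifferentiableAt ℝ (fun r => F' r ((0:ℝ), (1:ℝ))) q := fun q hq =>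
    (hasFDerivAt_apply_const (hF'd q hq).hasFDerivAt _).differentiableAt
  have h22 : ∀ q ∈ U, pd2 (pd2 w) q.1 q.2 = B q ((0:ℝ),(1:ℝ)) ((0:ℝ),(1:ℝ)) := by
    intro q hq
    rw [pd2_eq hU h2 hA2 hq,
      (hasFDerivAt_apply_const (hF'd q hq).hasFDerivAt ((0:ℝ),(1:ℝ))).fderiv]
    simp
    rfl
  -- level 3
  set Cp : (ℝ × ℝ) →L[ℝ] (ℝ × ℝ) →L[ℝ] (ℝ × ℝ) →L[ℝ] ℝ := fderiv ℝ B p with hCdef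
  have hB11d : ∀ q ∈ U, DifferentiableAt ℝ (fun r => B r ((1:ℝ),(0:ℝ)) ((1:ℝ),(0:ℝ))) q :=
    fun q hq => (hasFDerivAt_apply2 (hBd q hq).hasFDerivAt _ _).differentiableAt
  have hB21d : ∀ q ∈ U, DifferentiableAt ℝ (fun r => B r ((0:ℝ),(1:ℝ)) ((1:ℝ),(0:ℝ))) q :=
    fun q hq => (hasFDerivAt_apply2 (hBd q hq).hasFDerivAt _ _).differentiableAt
  have h111 : pd1 (pd1 (pd1 w)) p.1 p.2 = Cp ((1:ℝ),(0:ℝ)) ((1:ℝ),(0:ℝ)) ((1:ℝ),(0:ℝ)) := by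
    rw [pd1_eq hU h11 hB11d hp,
      (hasFDerivAt_apply2 (hBd p hp).hasFDerivAt ((1:ℝ),(0:ℝ)) ((1:ℝ),(0:ℝ))).fderiv]
    simp
    rfl
  have h211 : pd2 (pd1 (pd1 w)) p.1 p.2 = Cp ((0:ℝ),(1:ℝ)) ((1:ℝ),(0:ℝ)) ((1:ℝ),(0:ℝ)) := by
    rw [pd2_eq hU h11 hB11d hp,
      (hasFDerivAt_apply2 (hBd p hp).hasFDerivAt ((1:ℝ),(0:ℝ)) ((1:ℝ),(0:ℝ))).fderiv]
    simp
    rfl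
  have h221 : pd2 (pd2 (pd1 w)) p.1 p.2 = Cp ((0:ℝ),(1:ℝ)) ((0:ℝ),(1:ℝ)) ((1:ℝ),(0:ℝ)) := by
    rw [pd2_eq hU h21 hB21d hp,
      (hasFDerivAt_apply2 (hBd p hp).hasFDerivAt ((0:ℝ),(1:ℝ)) ((1:ℝ),(0:ℝ))).fderiv]
    simp
    rfl
  -- symmetry of B on U
  have hsymB : ∀ q ∈ U, ∀ u v : ℝ × ℝ, B q u v = B q v u := by
    intro q hq u v
    exact (hw'.contDiffAt (hU.mem_nhds hq)).isSymmSndFDerivAt (by norm_num) u v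
  -- symmetry of Cp in first two arguments
  have hsymC12 : ∀ u v : ℝ × ℝ, Cp u v = Cp v u := by
    intro u v
    exact (hF'on.contDiffAt (hU.mem_nhds hp)).isSymmSndFDerivAt (by norm_num) u v
  -- symmetry of Cp in last two arguments
  have hsw : ∀ a : ℝ × ℝ, Cp a ((0:ℝ),(1:ℝ)) ((1:ℝ),(0:ℝ)) = Cp a ((1:ℝ),(0:ℝ)) ((0:ℝ),(1:ℝ)) := by
    have h_a := hasFDerivAt_apply2 (hBd p hp).hasFDerivAt ((1:ℝ),(0:ℝ)) ((0:ℝ),(1:ℝ))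
    have h_b := hasFDerivAt_apply2 (hBd p hp).hasFDerivAt ((0:ℝ),(1:ℝ)) ((1:ℝ),(0:ℝ))
    have heq : (fun q => B q ((1:ℝ),(0:ℝ)) ((0:ℝ),(1:ℝ)))
        =ᶠ[𝓝 p] (fun q => B q ((0:ℝ),(1:ℝ)) ((1:ℝ),(0:ℝ))) := by
      filter_upwards [hU.mem_nhds hp] with q hq using by rw [hsymB q hq]
    have huniq := (h_b.congr_of_eventuallyEq heq).unique h_a
    intro a
    have h3 := DFunLike.congr_fun huniq a
    simpa [ContinuousLinearMap.flip_apply] using h3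
  -- derivative of the Monge-Ampère identity in the x-direction
  have hd11 : HasDerivAt (fun t => B (t, p.2) ((1:ℝ),(0:ℝ)) ((1:ℝ),(0:ℝ)))
      (Cp ((1:ℝ),(0:ℝ)) ((1:ℝ),(0:ℝ)) ((1:ℝ),(0:ℝ))) p.1 := by
    have hF := hasFDerivAt_apply2 (hBd p hp).hasFDerivAt ((1:ℝ),(0:ℝ)) ((1:ℝ),(0:ℝ))
    have h := hasDerivAt_slice1 hF.differentiableAt
    rw [hF.fderiv] at h
    simpa [ContinuousLinearMap.flip_apply] using h
  have hd22 : HasDerivAt (fun t => B (t, p.2) ((0:ℝ),(1:ℝ)) ((0:ℝ),(1:ℝ)))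
      (Cp ((1:ℝ),(0:ℝ)) ((0:ℝ),(1:ℝ)) ((0:ℝ),(1:ℝ))) p.1 := by
    have hF := hasFDerivAt_apply2 (hBd p hp).hasFDerivAt ((0:ℝ),(1:ℝ)) ((0:ℝ),(1:ℝ))
    have h := hasDerivAt_slice1 hF.differentiableAt
    rw [hF.fderiv] at h
    simpa [ContinuousLinearMap.flip_apply] using h
  have hd21 : HasDerivAt (fun t => B (t, p.2) ((0:ℝ),(1:ℝ)) ((1:ℝ),(0:ℝ)))
      (Cp ((1:ℝ),(0:ℝ)) ((0:ℝ),(1:ℝ)) ((1:ℝ),(0:ℝ))) p.1 := by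
    have hF := hasFDerivAt_apply2 (hBd p hp).hasFDerivAt ((0:ℝ),(1:ℝ)) ((1:ℝ),(0:ℝ))
    have h := hasDerivAt_slice1 hF.differentiableAt
    rw [hF.fderiv] at h
    simpa [ContinuousLinearMap.flip_apply] using h
  have hprod := (hd11.mul hd22).sub (hd21.pow 2)
  have hBfun : (fun t => pd1 (pd1 w) t p.2 * pd2 (pd2 w) t p.2 - (pd2 (pd1 w) t p.2)^2)
      =ᶠ[𝓝 p.1] (fun t => B (t, p.2) ((1:ℝ),(0:ℝ)) ((1:ℝ),(0:ℝ)) *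
        B (t, p.2) ((0:ℝ),(1:ℝ)) ((0:ℝ),(1:ℝ)) - (B (t, p.2) ((0:ℝ),(1:ℝ)) ((1:ℝ),(0:ℝ)))^2) := by
    filter_upwards [mem_slice1 hU hp] with t ht
    rw [show pd1 (pd1 w) t p.2 = _ from h11 (t, p.2) ht,
      show pd2 (pd2 w) t p.2 = _ from h22 (t, p.2) ht,
      show pd2 (pd1 w) t p.2 = _ from h21 (t, p.2) ht]
  have hconst : (fun t => pd1 (pd1 w) t p.2 * pd2 (pd2 w) t p.2 - (pd2 (pd1 w) t p.2)^2)
      =ᶠ[𝓝 p.1] (fun _ => -(lam p.2)^2) := by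
    filter_upwards [mem_slice1 hU hp] with t ht using hMA (t, p.2) ht
  have hzero : deriv (fun t => B (t, p.2) ((1:ℝ),(0:ℝ)) ((1:ℝ),(0:ℝ)) *
        B (t, p.2) ((0:ℝ),(1:ℝ)) ((0:ℝ),(1:ℝ)) - (B (t, p.2) ((0:ℝ),(1:ℝ)) ((1:ℝ),(0:ℝ)))^2) p.1
      = 0 := by
    rw [← hBfun.deriv_eq, hconst.deriv_eq]
    simp
  have hkey := hprod.deriv
  replace hkey : (0:ℝ) = _ := hzero.symm.trans hkey
  -- rewrite the goal in terms of B and Cp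
  rw [h111, h211, h221, show pd2 (pd1 w) p.1 p.2 = _ from h21 p hp,
    show pd2 (pd2 w) p.1 p.2 = _ from h22 p hp,
    show pd1 (pd1 w) p.1 p.2 = _ from h11 p hp]
  -- use symmetries to normalize hkey
  rw [hsymC12 ((1:ℝ),(0:ℝ)) ((0:ℝ),(1:ℝ)), ← hsw ((0:ℝ),(1:ℝ))] at hkey
  simp only [Prod.mk.eta] at hkey
  norm_num at hkey
  have hMAp := hMA p hp
  rw [show pd2 (pd1 w) p.1 p.2 = _ from h21 p hp,
    show pd2 (pd2 w) p.1 p.2 = _ from h22 p hp,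
    show pd1 (pd1 w) p.1 p.2 = _ from h11 p hp] at hMAp
  have hlamp := hlam p hp
  have h2L : (2 : ℝ) * (lam p.2)^2 ≠ 0 := by positivity
  set m := B p ((1:ℝ),(0:ℝ)) ((1:ℝ),(0:ℝ))
  set v22 := B p ((0:ℝ),(1:ℝ)) ((0:ℝ),(1:ℝ))
  set u := B p ((0:ℝ),(1:ℝ)) ((1:ℝ),(0:ℝ))
  set a := Cp ((1:ℝ),(0:ℝ)) ((1:ℝ),(0:ℝ)) ((1:ℝ),(0:ℝ))
  set b := Cp ((0:ℝ),(1:ℝ)) ((1:ℝ),(0:ℝ)) ((1:ℝ),(0:ℝ))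
  set c := Cp ((0:ℝ),(1:ℝ)) ((0:ℝ),(1:ℝ)) ((1:ℝ),(0:ℝ))
  have hkey' : a * v22 + m * c - 2 * u * b = 0 := by linarith [hkey]
  have goal' : -(u * v22) * a + 2 * lam p.2 ^ 2 * b = (u * c - 2 * v22 * b) * m := by
    linear_combination (-u) * hkey' + 2 * b * hMAp
  field_simp
  linear_combination goal'
end

section
/- Let S, T > 0 and c > 0, set Ω = {(s,t) ∈ [0,S]×[0,T] : s + t ≥ c}, and define a(t) = max(c−t, 0) and b(s) = max(c−s, 0). Let F : Ω → ℝ be continuous, and let K₁ and K₂ be continuous real-valued kernels on the compact sets {(s,t,σ) : (s,t) ∈ Ω, a(t) ≤ σ ≤ s} and {(s,t,τ) : (s,t) ∈ Ω, b(s) ≤ τ ≤ t} respectively. Then there exists a unique continuous function x : Ω → ℝ satisfying, for every (s,t) ∈ Ω, the two-dimensional Volterra integral equation of the second kind x(s,t) = F(s,t) + ∫_{a(t)}^{s} K₁(s,t,σ)·x(σ,t) dσ + ∫_{b(s)}^{t} K₂(s,t,τ)·x(s,τ) dτ. -/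
open MeasureTheory intervalIntegral Set

noncomputable def volR (S T c : ℝ) (p : ℝ × ℝ) : ℝ × ℝ :=
  (min S (max 0 (min p.1 S) + max (c - max 0 (min p.1 S) - max 0 (min p.2 T)) 0),
   min T (max 0 (min p.2 T) + max (c - max 0 (min p.1 S) - max 0 (min p.2 T)) 0))

lemma volR_continuous (S T c : ℝ) : Continuous (volR S T c) := by
  unfold volR; fun_prop

lemma volR_spec (S T c : ℝ) (hS : 0 ≤ S) (hT : 0 ≤ T) (hST : c ≤ S + T) (p : ℝ × ℝ) :
    0 ≤ (volR S T c p).1 ∧ (volR S T c p).1 ≤ S ∧ 0 ≤ (volR S T c p).2 ∧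
      (volR S T c p).2 ≤ T ∧ c ≤ (volR S T c p).1 + (volR S T c p).2 := by
  unfold volR
  set u := max 0 (min p.1 S) with hu
  set v := max 0 (min p.2 T) with hv
  set d := max (c - u - v) 0 with hd
  have hu0 : 0 ≤ u := le_max_left _ _
  have huS : u ≤ S := max_le hS (min_le_right _ _)
  have hv0 : 0 ≤ v := le_max_left _ _
  have hvT : v ≤ T := max_le hT (min_le_right _ _)
  have hd0 : 0 ≤ d := le_max_right _ _
  have hdc : c - u - v ≤ d := le_max_left _ _
  refine ⟨le_min hS (by linarith), min_le_left _ _, le_min hT (by linarith), min_le_left _ _, ?_⟩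
  show c ≤ min S (u + d) + min T (v + d)
  rcases min_cases S (u + d) with ⟨h1, h1'⟩ | ⟨h1, h1'⟩ <;>
    rcases min_cases T (v + d) with ⟨h2, h2'⟩ | ⟨h2, h2'⟩ <;>
    rw [h1, h2] <;> linarith

lemma volR_id (S T c : ℝ) (p : ℝ × ℝ) (h1 : 0 ≤ p.1) (h2 : p.1 ≤ S) (h3 : 0 ≤ p.2)
    (h4 : p.2 ≤ T) (h5 : c ≤ p.1 + p.2) : volR S T c p = p := by
  unfold volR
  simp only [min_eq_left h2, max_eq_right h1, min_eq_left h4, max_eq_right h3,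
    max_eq_right (show c - p.1 - p.2 ≤ 0 by linarith), add_zero, min_eq_right h2,
    min_eq_right h4]

lemma contInt_aux {g : (ℝ × ℝ) → ℝ → ℝ} (hg : Continuous (Function.uncurry g))
    {l e : ℝ × ℝ → ℝ} (hl : Continuous l) (he : Continuous e) :
    Continuous fun p : ℝ × ℝ => ∫ σ in (l p)..(e p), g p σ := by
  have hInt : ∀ (p : ℝ × ℝ) (a b : ℝ), IntervalIntegrable (g p) volume a b := fun p a b =>
    (hg.comp (Continuous.prodMk_right p)).intervalIntegrable a b
  have h1 := intervalIntegral.continuous_parametric_intervalIntegral_of_continuous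
    (a₀ := 0) (μ := volume) hg he
  have h2 := intervalIntegral.continuous_parametric_intervalIntegral_of_continuous
    (a₀ := 0) (μ := volume) hg hl
  have heq : (fun p : ℝ × ℝ => ∫ σ in (l p)..(e p), g p σ) =
      fun p => (∫ σ in (0:ℝ)..(e p), g p σ) - ∫ σ in (0:ℝ)..(l p), g p σ := by
    funext p
    rw [intervalIntegral.integral_interval_sub_left (hInt p 0 (e p)) (hInt p 0 (l p))]
  rw [heq]; exact h1.sub h2

lemma intPow_aux (a b d : ℝ) (n : ℕ) :
    (∫ σ in a..b, (σ + d) ^ n) = ((b + d) ^ (n + 1) - (a + d) ^ (n + 1)) / (n + 1) := by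
  rw [intervalIntegral.integral_comp_add_right (fun y => y ^ n) d, integral_pow]

lemma key_int {a b e : ℝ} {n : ℕ} {h : ℝ → ℝ} (hh : Continuous h) (hab : a ≤ b)
    (h0 : 0 ≤ a + e) (C : ℝ) (hC : 0 ≤ C)
    (hbd : ∀ σ ∈ Set.Icc a b, |h σ| ≤ C * (σ + e) ^ n) :
    |∫ σ in a..b, h σ| ≤ C * (b + e) ^ (n + 1) / ((n : ℝ) + 1) := by
  have h1 : |∫ σ in a..b, h σ| ≤ ∫ σ in a..b, |h σ| :=
    intervalIntegral.abs_integral_le_integral_abs hab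
  have h2 : (∫ σ in a..b, |h σ|) ≤ ∫ σ in a..b, C * (σ + e) ^ n :=
    intervalIntegral.integral_mono_on hab (hh.abs.intervalIntegrable _ _)
      ((by fun_prop : Continuous fun σ : ℝ => C * (σ + e) ^ n).intervalIntegrable _ _) hbd
  have h3 : (∫ σ in a..b, C * (σ + e) ^ n)
      = C * (((b + e) ^ (n + 1) - (a + e) ^ (n + 1)) / ((n : ℝ) + 1)) := by
    rw [intervalIntegral.integral_const_mul, intPow_aux]
  have h4 : (0:ℝ) ≤ (a + e) ^ (n + 1) := pow_nonneg h0 _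
  have h5 : ((b + e) ^ (n + 1) - (a + e) ^ (n + 1)) / ((n : ℝ) + 1)
      ≤ (b + e) ^ (n + 1) / ((n : ℝ) + 1) := by
    gcongr
    case hab => linarith
  calc |∫ σ in a..b, h σ| ≤ ∫ σ in a..b, |h σ| := h1
    _ ≤ ∫ σ in a..b, C * (σ + e) ^ n := h2
    _ = C * (((b + e) ^ (n + 1) - (a + e) ^ (n + 1)) / ((n : ℝ) + 1)) := h3
    _ ≤ C * ((b + e) ^ (n + 1) / ((n : ℝ) + 1)) := by
        exact mul_le_mul_of_nonneg_left h5 hC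
    _ = C * (b + e) ^ (n + 1) / ((n : ℝ) + 1) := by ring


/-- Existence and uniqueness of a continuous solution of the
two-dimensional Volterra integral equation of the second kind on the truncated
cylinder domain `Ω = {(s,t) ∈ [0,S]×[0,T] : s+t ≥ c}`, with lower limits
`a(t) = (c−t)⁺`, `b(s) = (c−s)⁺`, continuous forcing `F`, and kernels `K₁, K₂`
continuous on the indicated compact sets. -/
theorem volterra_existence_uniqueness
    (S T c : ℝ) (hS : 0 < S) (hT : 0 < T) (hc : 0 < c)
    (Ω : Set (ℝ × ℝ))
    (hΩ : Ω = {p : ℝ × ℝ | p.1 ∈ Set.Icc 0 S ∧ p.2 ∈ Set.Icc 0 T ∧ c ≤ p.1 + p.2})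
    (F : ℝ → ℝ → ℝ) (hF : ContinuousOn (fun p : ℝ × ℝ => F p.1 p.2) Ω)
    (K₁ K₂ : ℝ → ℝ → ℝ → ℝ)
    (hK₁ : ContinuousOn (fun q : (ℝ × ℝ) × ℝ => K₁ q.1.1 q.1.2 q.2)
      {q : (ℝ × ℝ) × ℝ | q.1 ∈ Ω ∧ max (c - q.1.2) 0 ≤ q.2 ∧ q.2 ≤ q.1.1})
    (hK₂ : ContinuousOn (fun q : (ℝ × ℝ) × ℝ => K₂ q.1.1 q.1.2 q.2)
      {q : (ℝ × ℝ) × ℝ | q.1 ∈ Ω ∧ max (c - q.1.1) 0 ≤ q.2 ∧ q.2 ≤ q.1.2}) :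
    ∃ x : ℝ → ℝ → ℝ,
      (ContinuousOn (fun p : ℝ × ℝ => x p.1 p.2) Ω ∧
        ∀ p ∈ Ω, x p.1 p.2 = F p.1 p.2
          + (∫ σ in (max (c - p.2) 0)..p.1, K₁ p.1 p.2 σ * x σ p.2)
          + (∫ τ in (max (c - p.1) 0)..p.2, K₂ p.1 p.2 τ * x p.1 τ)) ∧
      ∀ y : ℝ → ℝ → ℝ,
        ContinuousOn (fun p : ℝ × ℝ => y p.1 p.2) Ω →
        (∀ p ∈ Ω, y p.1 p.2 = F p.1 p.2
          + (∫ σ in (max (c - p.2) 0)..p.1, K₁ p.1 p.2 σ * y σ p.2)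
          + (∫ τ in (max (c - p.1) 0)..p.2, K₂ p.1 p.2 τ * y p.1 τ)) →
        ∀ p ∈ Ω, y p.1 p.2 = x p.1 p.2 := by
  by_cases hST : c ≤ S + T
  · -- main case
    have hS0 : (0:ℝ) ≤ S := hS.le
    have hT0 : (0:ℝ) ≤ T := hT.le
    have hmem : ∀ p : ℝ × ℝ, p ∈ Ω ↔
        (0 ≤ p.1 ∧ p.1 ≤ S ∧ 0 ≤ p.2 ∧ p.2 ≤ T ∧ c ≤ p.1 + p.2) := by
      intro p; rw [hΩ]
      simp only [Set.mem_setOf_eq, Set.mem_Icc, and_assoc]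
    have hΩeq : Ω = (Set.Icc 0 S ×ˢ Set.Icc 0 T) ∩ {p : ℝ × ℝ | c ≤ p.1 + p.2} := by
      rw [hΩ]; ext p
      simp only [Set.mem_setOf_eq, Set.mem_inter_iff, Set.mem_prod, Set.mem_Icc]
      tauto
    have hcomp : IsCompact Ω := by
      rw [hΩeq]
      exact (isCompact_Icc.prod isCompact_Icc).inter_right
        (isClosed_le continuous_const (continuous_fst.add continuous_snd))
    have hclosed : IsClosed Ω := hcomp.isClosed
    haveI : CompactSpace Ω := isCompact_iff_compactSpace.mp hcomp
    -- the retraction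
    have hrmem : ∀ p : ℝ × ℝ, volR S T c p ∈ Ω := by
      intro p
      rw [hmem]
      exact volR_spec S T c hS0 hT0 hST p
    have hrid : ∀ p ∈ Ω, volR S T c p = p := by
      intro p hp; rw [hmem] at hp
      exact volR_id S T c p hp.1 hp.2.1 hp.2.2.1 hp.2.2.2.1 hp.2.2.2.2
    have hrcont : Continuous (volR S T c) := volR_continuous S T c
    set r : ℝ × ℝ → ℝ × ℝ := volR S T c with hrdef
    -- Tietze extensions
    obtain ⟨Fb, hFbr⟩ := ContinuousMap.exists_restrict_eq (Y := ℝ) hclosed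
      ⟨Ω.restrict (fun p : ℝ × ℝ => F p.1 p.2), hF.restrict⟩
    have hFb : ∀ (p : ℝ × ℝ), p ∈ Ω → Fb p = F p.1 p.2 := by
      intro p hp
      exact DFunLike.congr_fun hFbr (⟨p, hp⟩ : Ω)
    have hD1closed : IsClosed {q : (ℝ × ℝ) × ℝ | q.1 ∈ Ω ∧ max (c - q.1.2) 0 ≤ q.2 ∧ q.2 ≤ q.1.1} := by
      have : {q : (ℝ × ℝ) × ℝ | q.1 ∈ Ω ∧ max (c - q.1.2) 0 ≤ q.2 ∧ q.2 ≤ q.1.1}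
          = (Prod.fst ⁻¹' Ω) ∩ ({q : (ℝ × ℝ) × ℝ | max (c - q.1.2) 0 ≤ q.2}
            ∩ {q : (ℝ × ℝ) × ℝ | q.2 ≤ q.1.1}) := by
        ext q; simp only [Set.mem_setOf_eq, Set.mem_inter_iff, Set.mem_preimage]
      rw [this]
      exact (hclosed.preimage continuous_fst).inter
        ((isClosed_le (by fun_prop) continuous_snd).inter
          (isClosed_le continuous_snd (continuous_fst.fst)))
    have hD2closed : IsClosed {q : (ℝ × ℝ) × ℝ | q.1 ∈ Ω ∧ max (c - q.1.1) 0 ≤ q.2 ∧ q.2 ≤ q.1.2} := by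
      have : {q : (ℝ × ℝ) × ℝ | q.1 ∈ Ω ∧ max (c - q.1.1) 0 ≤ q.2 ∧ q.2 ≤ q.1.2}
          = (Prod.fst ⁻¹' Ω) ∩ ({q : (ℝ × ℝ) × ℝ | max (c - q.1.1) 0 ≤ q.2}
            ∩ {q : (ℝ × ℝ) × ℝ | q.2 ≤ q.1.2}) := by
        ext q; simp only [Set.mem_setOf_eq, Set.mem_inter_iff, Set.mem_preimage]
      rw [this]
      exact (hclosed.preimage continuous_fst).inter
        ((isClosed_le (by fun_prop) continuous_snd).inter
          (isClosed_le continuous_snd (continuous_fst.snd)))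
    obtain ⟨K1b, hK1br⟩ := ContinuousMap.exists_restrict_eq (Y := ℝ) hD1closed
      ⟨_, hK₁.restrict⟩
    have hK1b : ∀ q : (ℝ × ℝ) × ℝ, (hq : q ∈ {q : (ℝ × ℝ) × ℝ | q.1 ∈ Ω ∧
        max (c - q.1.2) 0 ≤ q.2 ∧ q.2 ≤ q.1.1}) → K1b q = K₁ q.1.1 q.1.2 q.2 := by
      intro q hq
      exact DFunLike.congr_fun hK1br ⟨q, hq⟩
    obtain ⟨K2b, hK2br⟩ := ContinuousMap.exists_restrict_eq (Y := ℝ) hD2closed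
      ⟨_, hK₂.restrict⟩
    have hK2b : ∀ q : (ℝ × ℝ) × ℝ, (hq : q ∈ {q : (ℝ × ℝ) × ℝ | q.1 ∈ Ω ∧
        max (c - q.1.1) 0 ≤ q.2 ∧ q.2 ≤ q.1.2}) → K2b q = K₂ q.1.1 q.1.2 q.2 := by
      intro q hq
      exact DFunLike.congr_fun hK2br ⟨q, hq⟩
    -- bounds on the kernels
    obtain ⟨M₁, hM₁⟩ := (hcomp.prod (isCompact_Icc (a := (0:ℝ)) (b := S))).exists_bound_of_continuousOn
      K1b.continuous.continuousOn
    obtain ⟨M₂, hM₂⟩ := (hcomp.prod (isCompact_Icc (a := (0:ℝ)) (b := T))).exists_bound_of_continuousOn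
      K2b.continuous.continuousOn
    set M : ℝ := max (max M₁ M₂) 0 with hMdef
    have hM0 : 0 ≤ M := le_max_right _ _
    have hM1le : M₁ ≤ M := (le_max_left _ _).trans (le_max_left _ _)
    have hM2le : M₂ ≤ M := (le_max_right M₁ M₂).trans (le_max_left _ _)
    -- membership helpers
    have hlow1 : ∀ p ∈ Ω, max (c - p.2) 0 ≤ p.1 := by
      intro p hp; rw [hmem] at hp
      exact max_le (by linarith [hp.2.2.2.2]) hp.1
    have hlow2 : ∀ p ∈ Ω, max (c - p.1) 0 ≤ p.2 := by
      intro p hp; rw [hmem] at hp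
      exact max_le (by linarith [hp.2.2.2.2]) hp.2.2.1
    have hVmem1 : ∀ p ∈ Ω, ∀ σ, max (c - p.2) 0 ≤ σ → σ ≤ p.1 → (σ, p.2) ∈ Ω := by
      intro p hp σ h1 h2
      rw [hmem] at hp ⊢
      have e1 : c - p.2 ≤ σ := le_trans (le_max_left _ _) h1
      have e2 : (0:ℝ) ≤ σ := le_trans (le_max_right _ _) h1
      refine ⟨?_, ?_, ?_, ?_, ?_⟩
      · exact e2
      · show σ ≤ S; linarith [hp.2.1]
      · exact hp.2.2.1
      · exact hp.2.2.2.1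
      · show c ≤ σ + p.2; linarith
    have hVmem2 : ∀ p ∈ Ω, ∀ τ, max (c - p.1) 0 ≤ τ → τ ≤ p.2 → (p.1, τ) ∈ Ω := by
      intro p hp τ h1 h2
      rw [hmem] at hp ⊢
      have e1 : c - p.1 ≤ τ := le_trans (le_max_left _ _) h1
      have e2 : (0:ℝ) ≤ τ := le_trans (le_max_right _ _) h1
      refine ⟨?_, ?_, ?_, ?_, ?_⟩
      · exact hp.1
      · exact hp.2.1
      · exact e2
      · show τ ≤ T; linarith [hp.2.2.2.1]
      · show c ≤ p.1 + τ; linarith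
    -- the integral operator
    set A : C(↥Ω, ℝ) → (ℝ × ℝ) → ℝ := fun z p =>
      Fb p + (∫ σ in (max (c - p.2) 0)..p.1, K1b ((p.1, p.2), σ) * z ⟨r (σ, p.2), hrmem _⟩)
           + (∫ τ in (max (c - p.1) 0)..p.2, K2b ((p.1, p.2), τ) * z ⟨r (p.1, τ), hrmem _⟩)
      with hAdef
    have cont1 : ∀ (z : C(↥Ω, ℝ)) (t : ℝ), Continuous fun σ : ℝ => z ⟨r (σ, t), hrmem _⟩ :=
      fun z t => z.continuous.comp
        ((hrcont.comp (continuous_id.prodMk continuous_const)).subtype_mk _)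
    have cont2 : ∀ (z : C(↥Ω, ℝ)) (s : ℝ), Continuous fun τ : ℝ => z ⟨r (s, τ), hrmem _⟩ :=
      fun z s => z.continuous.comp
        ((hrcont.comp (continuous_const.prodMk continuous_id)).subtype_mk _)
    have contK1 : ∀ s t : ℝ, Continuous fun σ : ℝ => K1b ((s, t), σ) :=
      fun s t => K1b.continuous.comp (continuous_const.prodMk continuous_id)
    have contK2 : ∀ s t : ℝ, Continuous fun τ : ℝ => K2b ((s, t), τ) :=
      fun s t => K2b.continuous.comp (continuous_const.prodMk continuous_id)
    have hAcont : ∀ z : C(↥Ω, ℝ), Continuous (A z) := by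
      intro z
      have hg1 : Continuous (Function.uncurry fun (p : ℝ × ℝ) (σ : ℝ) =>
          K1b ((p.1, p.2), σ) * z ⟨r (σ, p.2), hrmem _⟩) := by
        apply Continuous.mul
        · exact K1b.continuous
        · exact z.continuous.comp
            ((hrcont.comp (continuous_snd.prodMk (continuous_fst.snd))).subtype_mk _)
      have hg2 : Continuous (Function.uncurry fun (p : ℝ × ℝ) (τ : ℝ) =>
          K2b ((p.1, p.2), τ) * z ⟨r (p.1, τ), hrmem _⟩) := by
        apply Continuous.mul
        · exact K2b.continuous
        · exact z.continuous.comp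
            ((hrcont.comp ((continuous_fst.fst).prodMk continuous_snd)).subtype_mk _)
      exact (Fb.continuous.add (contInt_aux hg1 (by fun_prop) continuous_fst)).add
        (contInt_aux hg2 (by fun_prop) continuous_snd)
    set 𝒯 : C(↥Ω, ℝ) → C(↥Ω, ℝ) := fun z =>
      ⟨fun q => A z (q : ℝ × ℝ), (hAcont z).comp continuous_subtype_val⟩ with h𝒯def
    -- the fundamental pointwise contraction estimate
    have key : ∀ (u v : C(↥Ω, ℝ)) (Cn : ℝ) (n : ℕ), 0 ≤ Cn →
        (∀ q : ↥Ω, dist (u q) (v q) ≤ Cn * ((q : ℝ × ℝ).1 + (q : ℝ × ℝ).2 - c) ^ n) →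
        ∀ q : ↥Ω, dist (𝒯 u q) (𝒯 v q)
          ≤ 2 * M * Cn / ((n : ℝ) + 1) * ((q : ℝ × ℝ).1 + (q : ℝ × ℝ).2 - c) ^ (n + 1) := by
      intro u v Cn n hCn hb q
      obtain ⟨p, hp⟩ := q
      have hp' := (hmem p).mp hp
      obtain ⟨hp1, hp2, hp3, hp4, hp5⟩ := hp'
      have ha1 : max (c - p.2) 0 ≤ p.1 := hlow1 p hp
      have ha2 : max (c - p.1) 0 ≤ p.2 := hlow2 p hp
      have i1 : ∀ z : C(↥Ω, ℝ), IntervalIntegrable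
          (fun σ => K1b ((p.1, p.2), σ) * z ⟨r (σ, p.2), hrmem _⟩) volume
          (max (c - p.2) 0) p.1 :=
        fun z => ((contK1 p.1 p.2).mul (cont1 z p.2)).intervalIntegrable _ _
      have i2 : ∀ z : C(↥Ω, ℝ), IntervalIntegrable
          (fun τ => K2b ((p.1, p.2), τ) * z ⟨r (p.1, τ), hrmem _⟩) volume
          (max (c - p.1) 0) p.2 :=
        fun z => ((contK2 p.1 p.2).mul (cont2 z p.1)).intervalIntegrable _ _
      have hdiff : A u p - A v p =
          (∫ σ in (max (c - p.2) 0)..p.1,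
            K1b ((p.1, p.2), σ) * (u ⟨r (σ, p.2), hrmem _⟩ - v ⟨r (σ, p.2), hrmem _⟩))
          + (∫ τ in (max (c - p.1) 0)..p.2,
            K2b ((p.1, p.2), τ) * (u ⟨r (p.1, τ), hrmem _⟩ - v ⟨r (p.1, τ), hrmem _⟩)) := by
        rw [hAdef]
        simp only [mul_sub]
        rw [intervalIntegral.integral_sub (i1 u) (i1 v),
          intervalIntegral.integral_sub (i2 u) (i2 v)]
        ring
      have hb1 : |∫ σ in (max (c - p.2) 0)..p.1,
          K1b ((p.1, p.2), σ) * (u ⟨r (σ, p.2), hrmem _⟩ - v ⟨r (σ, p.2), hrmem _⟩)|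
          ≤ (M * Cn) * (p.1 + (p.2 - c)) ^ (n + 1) / ((n : ℝ) + 1) := by
        apply key_int ((contK1 p.1 p.2).mul ((cont1 u p.2).sub (cont1 v p.2))) ha1
        · have := le_max_left (c - p.2) (0:ℝ); linarith
        · positivity
        · intro σ hσ
          have hmemσ : (σ, p.2) ∈ Ω := hVmem1 p hp σ hσ.1 hσ.2
          have h0σ : (0:ℝ) ≤ σ := le_trans (le_max_right _ _) hσ.1
          have hσS : σ ≤ S := le_trans hσ.2 hp2
          simp only [Pi.mul_apply, Pi.sub_apply]
          rw [abs_mul]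
          have hK : |K1b ((p.1, p.2), σ)| ≤ M := by
            have := hM₁ ((p.1, p.2), σ) ⟨hp, h0σ, hσS⟩
            rw [Real.norm_eq_abs] at this
            exact this.trans hM1le
          have hUV : |u ⟨r (σ, p.2), hrmem _⟩ - v ⟨r (σ, p.2), hrmem _⟩|
              ≤ Cn * (σ + (p.2 - c)) ^ n := by
            have h2a := hb ⟨r (σ, p.2), hrmem _⟩
            rw [show ((⟨r (σ, p.2), hrmem (σ, p.2)⟩ : ↥Ω) : ℝ × ℝ) = (σ, p.2)
              from hrid _ hmemσ] at h2a
            rw [Real.dist_eq] at h2a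
            have h2b : |u ⟨r (σ, p.2), hrmem _⟩ - v ⟨r (σ, p.2), hrmem _⟩|
                ≤ Cn * (σ + p.2 - c) ^ n := h2a
            calc |u ⟨r (σ, p.2), hrmem _⟩ - v ⟨r (σ, p.2), hrmem _⟩|
                ≤ Cn * (σ + p.2 - c) ^ n := h2b
              _ = Cn * (σ + (p.2 - c)) ^ n := by ring
          calc |K1b ((p.1, p.2), σ)| * |u ⟨r (σ, p.2), hrmem _⟩ - v ⟨r (σ, p.2), hrmem _⟩|
              ≤ M * (Cn * (σ + (p.2 - c)) ^ n) := by
                apply mul_le_mul hK hUV (abs_nonneg _) hM0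
            _ = M * Cn * (σ + (p.2 - c)) ^ n := by ring
      have hb2 : |∫ τ in (max (c - p.1) 0)..p.2,
          K2b ((p.1, p.2), τ) * (u ⟨r (p.1, τ), hrmem _⟩ - v ⟨r (p.1, τ), hrmem _⟩)|
          ≤ (M * Cn) * (p.2 + (p.1 - c)) ^ (n + 1) / ((n : ℝ) + 1) := by
        apply key_int ((contK2 p.1 p.2).mul ((cont2 u p.1).sub (cont2 v p.1))) ha2
        · have := le_max_left (c - p.1) (0:ℝ); linarith
        · positivity
        · intro τ hτ
          have hmemτ : (p.1, τ) ∈ Ω := hVmem2 p hp τ hτ.1 hτ.2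
          have h0τ : (0:ℝ) ≤ τ := le_trans (le_max_right _ _) hτ.1
          have hτT : τ ≤ T := le_trans hτ.2 hp4
          simp only [Pi.mul_apply, Pi.sub_apply]
          rw [abs_mul]
          have hK : |K2b ((p.1, p.2), τ)| ≤ M := by
            have := hM₂ ((p.1, p.2), τ) ⟨hp, h0τ, hτT⟩
            rw [Real.norm_eq_abs] at this
            exact this.trans hM2le
          have hUV : |u ⟨r (p.1, τ), hrmem _⟩ - v ⟨r (p.1, τ), hrmem _⟩|
              ≤ Cn * (τ + (p.1 - c)) ^ n := by
            have h2a := hb ⟨r (p.1, τ), hrmem _⟩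
            rw [show ((⟨r (p.1, τ), hrmem (p.1, τ)⟩ : ↥Ω) : ℝ × ℝ) = (p.1, τ)
              from hrid _ hmemτ] at h2a
            rw [Real.dist_eq] at h2a
            have h2b : |u ⟨r (p.1, τ), hrmem _⟩ - v ⟨r (p.1, τ), hrmem _⟩|
                ≤ Cn * (p.1 + τ - c) ^ n := h2a
            calc |u ⟨r (p.1, τ), hrmem _⟩ - v ⟨r (p.1, τ), hrmem _⟩|
                ≤ Cn * (p.1 + τ - c) ^ n := h2b
              _ = Cn * (τ + (p.1 - c)) ^ n := by ring
          calc |K2b ((p.1, p.2), τ)| * |u ⟨r (p.1, τ), hrmem _⟩ - v ⟨r (p.1, τ), hrmem _⟩|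
              ≤ M * (Cn * (τ + (p.1 - c)) ^ n) := by
                apply mul_le_mul hK hUV (abs_nonneg _) hM0
            _ = M * Cn * (τ + (p.1 - c)) ^ n := by ring
      have hdist : dist (𝒯 u ⟨p, hp⟩) (𝒯 v ⟨p, hp⟩) = |A u p - A v p| := Real.dist_eq _ _
      rw [hdist, hdiff]
      calc |_ + _| ≤ (M * Cn) * (p.1 + (p.2 - c)) ^ (n + 1) / ((n : ℝ) + 1)
            + (M * Cn) * (p.2 + (p.1 - c)) ^ (n + 1) / ((n : ℝ) + 1) :=
          le_trans (abs_add_le _ _) (add_le_add hb1 hb2)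
        _ = 2 * M * Cn / ((n : ℝ) + 1) * (((⟨p, hp⟩ : ↥Ω) : ℝ × ℝ).1
            + ((⟨p, hp⟩ : ↥Ω) : ℝ × ℝ).2 - c) ^ (n + 1) := by
          show _ = 2 * M * Cn / ((n : ℝ) + 1) * (p.1 + p.2 - c) ^ (n + 1)
          have e1 : p.1 + (p.2 - c) = p.1 + p.2 - c := by ring
          have e2 : p.2 + (p.1 - c) = p.1 + p.2 - c := by ring
          rw [e1, e2]
          ring
    -- iterated estimate
    have iter : ∀ (u v : C(↥Ω, ℝ)) (n : ℕ) (q : ↥Ω),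
        dist ((𝒯^[n]) u q) ((𝒯^[n]) v q)
          ≤ (2 * M) ^ n / (n.factorial : ℝ) * dist u v
            * ((q : ℝ × ℝ).1 + (q : ℝ × ℝ).2 - c) ^ n := by
      intro u v n
      induction n with
      | zero =>
        intro q
        simpa using ContinuousMap.dist_apply_le_dist q
      | succ n ih =>
        intro q
        have hCn : 0 ≤ (2 * M) ^ n / (n.factorial : ℝ) * dist u v := by positivity
        have step := key ((𝒯^[n]) u) ((𝒯^[n]) v)
          ((2 * M) ^ n / (n.factorial : ℝ) * dist u v) n hCn ih q
        rw [Function.iterate_succ_apply', Function.iterate_succ_apply']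
        refine le_trans step (le_of_eq ?_)
        have hf1 : ((n.factorial : ℝ)) ≠ 0 := by positivity
        have hf2 : ((n : ℝ) + 1) ≠ 0 := by positivity
        rw [Nat.factorial_succ]
        push_cast
        field_simp
        ring
    -- sup-norm contraction estimate for the iterates
    have hdistiter : ∀ (n : ℕ) (u v : C(↥Ω, ℝ)),
        dist ((𝒯^[n]) u) ((𝒯^[n]) v)
          ≤ (2 * M * (S + T)) ^ n / (n.factorial : ℝ) * dist u v := by
      intro n u v
      have hC : 0 ≤ (2 * M * (S + T)) ^ n / (n.factorial : ℝ) * dist u v := by positivity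
      refine (ContinuousMap.dist_le hC).mpr ?_
      intro q
      have hq := (hmem (q : ℝ × ℝ)).mp q.2
      have h01 : 0 ≤ (q : ℝ × ℝ).1 + (q : ℝ × ℝ).2 - c := by linarith [hq.2.2.2.2]
      have h02 : (q : ℝ × ℝ).1 + (q : ℝ × ℝ).2 - c ≤ S + T := by
        have := hq.2.1; have := hq.2.2.2.1; linarith [hc.le]
      calc dist ((𝒯^[n]) u q) ((𝒯^[n]) v q)
          ≤ (2 * M) ^ n / (n.factorial : ℝ) * dist u v
            * ((q : ℝ × ℝ).1 + (q : ℝ × ℝ).2 - c) ^ n := iter u v n q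
        _ ≤ (2 * M) ^ n / (n.factorial : ℝ) * dist u v * (S + T) ^ n := by
            apply mul_le_mul_of_nonneg_left (pow_le_pow_left₀ h01 h02 n) (by positivity)
        _ = (2 * M * (S + T)) ^ n / (n.factorial : ℝ) * dist u v := by
            rw [show ((2 * M * (S + T)) : ℝ) ^ n = (2 * M) ^ n * (S + T) ^ n
              from mul_pow _ _ _]
            ring
    -- choose n so that the n-th iterate is a contraction
    obtain ⟨n, hn⟩ := ((FloorSemiring.tendsto_pow_div_factorial_atTop
      (2 * M * (S + T))).eventually_lt_const zero_lt_one).exists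
    have hκ0 : 0 ≤ (2 * M * (S + T)) ^ n / (n.factorial : ℝ) := by positivity
    set κ : NNReal := ⟨(2 * M * (S + T)) ^ n / (n.factorial : ℝ), hκ0⟩ with hκdef
    haveI : Nonempty C(↥Ω, ℝ) := ⟨0⟩
    have hcontr : ContractingWith κ (𝒯^[n]) := by
      constructor
      · exact_mod_cast hn
      · apply LipschitzWith.of_dist_le_mul
        intro u v
        exact hdistiter n u v
    set xh : C(↥Ω, ℝ) := ContractingWith.fixedPoint (𝒯^[n]) hcontr with hxhdef
    have hfix : 𝒯 xh = xh := ContractingWith.isFixedPt_fixedPoint_iterate hcontr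
    -- rewriting the operator via the original data on Ω
    have hAeq : ∀ (z : C(↥Ω, ℝ)) (p : ℝ × ℝ), p ∈ Ω →
        A z p = F p.1 p.2
          + (∫ σ in (max (c - p.2) 0)..p.1, K₁ p.1 p.2 σ * z ⟨r (σ, p.2), hrmem _⟩)
          + (∫ τ in (max (c - p.1) 0)..p.2, K₂ p.1 p.2 τ * z ⟨r (p.1, τ), hrmem _⟩) := by
      intro z p hp
      have e0 : Fb p = F p.1 p.2 := hFb p hp
      have e1 : (∫ σ in (max (c - p.2) 0)..p.1, K1b ((p.1, p.2), σ) * z ⟨r (σ, p.2), hrmem _⟩)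
          = ∫ σ in (max (c - p.2) 0)..p.1, K₁ p.1 p.2 σ * z ⟨r (σ, p.2), hrmem _⟩ := by
        apply intervalIntegral.integral_congr
        intro σ hσ
        rw [Set.uIcc_of_le (hlow1 p hp)] at hσ
        show K1b ((p.1, p.2), σ) * z ⟨r (σ, p.2), hrmem _⟩
          = K₁ p.1 p.2 σ * z ⟨r (σ, p.2), hrmem _⟩
        rw [hK1b ((p.1, p.2), σ) ⟨hp, hσ.1, hσ.2⟩]
      have e2 : (∫ τ in (max (c - p.1) 0)..p.2, K2b ((p.1, p.2), τ) * z ⟨r (p.1, τ), hrmem _⟩)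
          = ∫ τ in (max (c - p.1) 0)..p.2, K₂ p.1 p.2 τ * z ⟨r (p.1, τ), hrmem _⟩ := by
        apply intervalIntegral.integral_congr
        intro τ hτ
        rw [Set.uIcc_of_le (hlow2 p hp)] at hτ
        show K2b ((p.1, p.2), τ) * z ⟨r (p.1, τ), hrmem _⟩
          = K₂ p.1 p.2 τ * z ⟨r (p.1, τ), hrmem _⟩
        rw [hK2b ((p.1, p.2), τ) ⟨hp, hτ.1, hτ.2⟩]
      simp only [hAdef]
      rw [e0, e1, e2]
    -- the solution
    refine ⟨fun s t => xh ⟨r (s, t), hrmem _⟩, ⟨?_, ?_⟩, ?_⟩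
    · exact (xh.continuous.comp (hrcont.subtype_mk hrmem)).continuousOn
    · intro p hp
      show xh ⟨r (p.1, p.2), hrmem _⟩ = _
      rw [show (⟨r (p.1, p.2), hrmem (p.1, p.2)⟩ : ↥Ω) = ⟨p, hp⟩
        from Subtype.ext (hrid p hp)]
      conv_lhs => rw [← hfix]
      show A xh p = _
      rw [hAeq xh p hp]
    · intro y hy hyeq p hp
      have hycont : Continuous (Ω.restrict fun p : ℝ × ℝ => y p.1 p.2) := hy.restrict
      set yh : C(↥Ω, ℝ) := ⟨Ω.restrict fun p : ℝ × ℝ => y p.1 p.2, hycont⟩ with hyhdef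
      have hTy : 𝒯 yh = yh := by
        apply ContinuousMap.ext
        rintro ⟨p', hp'⟩
        show A yh p' = y p'.1 p'.2
        rw [hAeq yh p' hp', hyeq p' hp']
        congr 1
        · congr 1
          apply intervalIntegral.integral_congr
          intro σ hσ
          rw [Set.uIcc_of_le (hlow1 p' hp')] at hσ
          have hmemσ : (σ, p'.2) ∈ Ω := hVmem1 p' hp' σ hσ.1 hσ.2
          show K₁ p'.1 p'.2 σ * y (r (σ, p'.2)).1 (r (σ, p'.2)).2 = K₁ p'.1 p'.2 σ * y σ p'.2
          rw [hrid _ hmemσ]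
        · apply intervalIntegral.integral_congr
          intro τ hτ
          rw [Set.uIcc_of_le (hlow2 p' hp')] at hτ
          have hmemτ : (p'.1, τ) ∈ Ω := hVmem2 p' hp' τ hτ.1 hτ.2
          show K₂ p'.1 p'.2 τ * y (r (p'.1, τ)).1 (r (p'.1, τ)).2 = K₂ p'.1 p'.2 τ * y p'.1 τ
          rw [hrid _ hmemτ]
      have hyfix : Function.IsFixedPt (𝒯^[n]) yh := Function.IsFixedPt.iterate hTy n
      have hyx : yh = xh := hcontr.fixedPoint_unique hyfix
      show y p.1 p.2 = xh ⟨r (p.1, p.2), hrmem _⟩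
      rw [show (⟨r (p.1, p.2), hrmem (p.1, p.2)⟩ : ↥Ω) = ⟨p, hp⟩
        from Subtype.ext (hrid p hp)]
      have := congrArg (fun z : C(↥Ω, ℝ) => z ⟨p, hp⟩) hyx
      exact this
  · -- Ω is empty
    have hempty : ∀ p : ℝ × ℝ, p ∉ Ω := by
      intro p hp
      rw [hΩ] at hp
      obtain ⟨⟨h1, h2⟩, ⟨h3, h4⟩, h5⟩ := hp
      exact hST (by linarith)
    exact ⟨fun _ _ => 0,
      ⟨fun p hp => absurd hp (hempty p), fun p hp => absurd hp (hempty p)⟩,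
      fun y _ _ p hp => absurd hp (hempty p)⟩
end

section
/- Let c > 0 and let λ : (0,∞) → ℝ be continuously differentiable with λ(u) > 0 for u > 0. Let the Cauchy–Goursat data consist of continuous g : [c,∞) → ℝ and h : [c,∞) → ℝ, absolutely continuous f : [0,c] → ℝ, and n ∈ L¹([0,c]), satisfying the corner conditions g(c) = f(c) and h(c) = f(0). Define 𝒢 and the operator 𝒜 on continuous functions on Ω̄_c = {(s,t) : s ≥ 0, t ≥ 0, s+t ≥ c} as in the context. If x₀ is continuous on Ω̄_c and satisfies the Dirichlet conditions x₀(s,0) = g(s) for s ≥ c, x₀(0,t) = h(t) for t ≥ c, and x₀(s, c−s) = f(s) for 0 ≤ s ≤ c, then x₁ := 𝒜x₀ also satisfies these three Dirichlet conditions, and moreover for almost every ξ ∈ (0,c) the one-sided limit D_n x₁(ξ) := lim_{z→0⁺} (x₁(ξ+z, c−ξ+z) − x₁(ξ, c−ξ))/z exists and equals n(ξ). -/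
open MeasureTheory

section Helpers

open Set Filter

private lemma avg_Icc' (F : ℝ → ℝ) {p q : ℝ} (h : p ≤ q) :
    ⨍ y in Icc p q, F y = (∫ σ in p..q, F σ) / (q - p) := by
  rw [setAverage_eq, measureReal_def, Real.volume_Icc, intervalIntegral.integral_of_le h,
    integral_Icc_eq_integral_Ioc, ENNReal.toReal_ofReal (by linarith), smul_eq_mul,
    div_eq_inv_mul]

private lemma half_tendsto' :
    Tendsto (fun z : ℝ => z / 2) (nhdsWithin 0 (Ioi 0)) (nhdsWithin 0 (Ioi 0)) := by
  apply tendsto_nhdsWithin_of_tendsto_nhds_of_eventually_within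
  · have : Tendsto (fun z : ℝ => z / 2) (nhds 0) (nhds 0) := by
      simpa using (tendsto_id (α := ℝ) (x := nhds 0)).div_const 2
    exact this.mono_left nhdsWithin_le_nhds
  · filter_upwards [self_mem_nhdsWithin] with z hz
    exact div_pos (show (0:ℝ) < z from hz) (by norm_num)

private lemma ae_avg' (F : ℝ → ℝ) (hF : Integrable F) :
    ∀ᵐ ξ : ℝ,
      Tendsto (fun z : ℝ => (∫ σ in ξ..(ξ+z), F σ)/z) (nhdsWithin 0 (Ioi 0)) (nhds (F ξ)) ∧
      Tendsto (fun z : ℝ => (∫ σ in (ξ-z)..ξ, F σ)/z) (nhdsWithin 0 (Ioi 0)) (nhds (F ξ)) ∧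
      Tendsto (fun z : ℝ => (∫ σ in (ξ-z)..(ξ+z), F σ)/z) (nhdsWithin 0 (Ioi 0))
        (nhds (2 * F ξ)) := by
  filter_upwards [IsUnifLocDoublingMeasure.ae_tendsto_average volume hF.locallyIntegrable 2]
    with ξ hξ
  have hid : Tendsto (fun z : ℝ => z) (nhdsWithin 0 (Ioi 0)) (nhdsWithin 0 (Ioi 0)) :=
    tendsto_id
  refine ⟨?_, ?_, ?_⟩
  · have h1 := hξ (fun z => ξ + z/2) (fun z => z/2) half_tendsto' ?ev1
    case ev1 =>
      filter_upwards [self_mem_nhdsWithin] with z hz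
      simp only [Metric.mem_closedBall, Real.dist_eq]
      rw [abs_of_nonpos (by linarith [le_of_lt (mem_Ioi.mp hz)])]
      linarith [le_of_lt (mem_Ioi.mp hz)]
    refine h1.congr' ?_
    filter_upwards [self_mem_nhdsWithin] with z hz
    have hz' : (0:ℝ) < z := hz
    have hball : Metric.closedBall (ξ + z/2) (z/2) = Icc ξ (ξ+z) := by
      rw [Real.closedBall_eq_Icc]; congr 1 <;> ring
    rw [hball, avg_Icc' F (by linarith)]
    congr 1; ring
  · have h1 := hξ (fun z => ξ - z/2) (fun z => z/2) half_tendsto' ?ev2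
    case ev2 =>
      filter_upwards [self_mem_nhdsWithin] with z hz
      simp only [Metric.mem_closedBall, Real.dist_eq]
      rw [abs_of_nonneg (by linarith [le_of_lt (mem_Ioi.mp hz)])]
      linarith [le_of_lt (mem_Ioi.mp hz)]
    refine h1.congr' ?_
    filter_upwards [self_mem_nhdsWithin] with z hz
    have hz' : (0:ℝ) < z := hz
    have hball : Metric.closedBall (ξ - z/2) (z/2) = Icc (ξ-z) ξ := by
      rw [Real.closedBall_eq_Icc]; congr 1 <;> ring
    rw [hball, avg_Icc' F (by linarith)]
    congr 1; ring
  · have h1 := hξ (fun _ => ξ) (fun z => z) hid ?ev3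
    case ev3 =>
      filter_upwards [self_mem_nhdsWithin] with z hz
      simp only [Metric.mem_closedBall, Real.dist_eq, sub_self, abs_zero]
      linarith [le_of_lt (mem_Ioi.mp hz)]
    have h2 : Tendsto (fun z : ℝ => 2 * ⨍ y in Metric.closedBall ξ z, F y)
        (nhdsWithin 0 (Ioi 0)) (nhds (2 * F ξ)) := h1.const_mul 2
    refine h2.congr' ?_
    filter_upwards [self_mem_nhdsWithin] with z hz
    have hz' : (0:ℝ) < z := hz
    rw [Real.closedBall_eq_Icc, avg_Icc' F (by linarith)]
    have : ξ + z - (ξ - z) = 2*z := by ring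
    rw [this]
    field_simp

private lemma tendsto_avg_of_cwa' (K : ℝ → ℝ → ℝ) (a A δ₀ : ℝ) (hδ₀ : 0 < δ₀)
    (hA : Tendsto (fun p : ℝ × ℝ => K p.1 p.2)
      (nhdsWithin (a, 0) {p : ℝ × ℝ | |p.1 - a| ≤ p.2 ∧ p.2 ≤ δ₀}) (nhds A))
    (hint : ∀ z ∈ Ioo (0:ℝ) δ₀, IntervalIntegrable (fun σ => K σ z) volume (a-z) (a+z)) :
    Tendsto (fun z => (∫ σ in (a-z)..(a+z), K σ z)/z) (nhdsWithin 0 (Ioi 0))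
      (nhds (2*A)) := by
  rw [Metric.tendsto_nhdsWithin_nhds]
  intro ε hε
  obtain ⟨δ₁, hδ₁, hd⟩ := Metric.tendsto_nhdsWithin_nhds.mp hA (ε/3) (by linarith)
  refine ⟨min δ₁ δ₀, lt_min hδ₁ hδ₀, ?_⟩
  intro z hz hzd
  have hz0 : (0:ℝ) < z := hz
  have hzδ : z < min δ₁ δ₀ := by rwa [Real.dist_eq, sub_zero, abs_of_pos hz0] at hzd
  have hz1 : z < δ₁ := lt_of_lt_of_le hzδ (min_le_left _ _)
  have hz2 : z < δ₀ := lt_of_lt_of_le hzδ (min_le_right _ _)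
  have hb : ∀ σ ∈ Set.uIoc (a-z) (a+z), ‖K σ z - A‖ ≤ ε/3 := by
    intro σ hσ
    rw [Set.uIoc_of_le (by linarith)] at hσ
    have h1 : |σ - a| ≤ z := abs_le.mpr ⟨by linarith [hσ.1], by linarith [hσ.2]⟩
    have hmem : ((σ, z) : ℝ × ℝ) ∈ {p : ℝ × ℝ | |p.1 - a| ≤ p.2 ∧ p.2 ≤ δ₀} :=
      ⟨h1, le_of_lt hz2⟩
    have hdist : dist ((σ, z) : ℝ × ℝ) (a, 0) < δ₁ := by
      rw [Prod.dist_eq]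
      simp only [Real.dist_eq, sub_zero]
      exact max_lt (lt_of_le_of_lt h1 hz1) (by rwa [abs_of_pos hz0])
    have := hd hmem hdist
    rw [Real.norm_eq_abs, ← Real.dist_eq]
    linarith
  have e2z : a + z - (a - z) = 2*z := by ring
  have hsub : ∫ σ in (a-z)..(a+z), (K σ z - A)
      = (∫ σ in (a-z)..(a+z), K σ z) - 2*z*A := by
    rw [intervalIntegral.integral_sub (hint z ⟨hz0, hz2⟩) intervalIntegrable_const,
      intervalIntegral.integral_const, e2z, smul_eq_mul]
  have hnorm : ‖(∫ σ in (a-z)..(a+z), K σ z) - 2*z*A‖ ≤ ε/3 * (2*z) := by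
    rw [← hsub]
    calc ‖∫ σ in (a-z)..(a+z), (K σ z - A)‖
        ≤ ε/3 * |a + z - (a - z)| := intervalIntegral.norm_integral_le_of_norm_le_const hb
      _ = ε/3 * (2*z) := by rw [e2z, abs_of_pos (by linarith)]
  rw [Real.dist_eq]
  have hq : (∫ σ in (a-z)..(a+z), K σ z)/z - 2*A
      = ((∫ σ in (a-z)..(a+z), K σ z) - 2*z*A)/z := by
    field_simp
  rw [hq, abs_div, abs_of_pos hz0, div_lt_iff₀ hz0]
  have h3 : |(∫ σ in (a-z)..(a+z), K σ z) - 2*z*A| ≤ ε/3*(2*z) := by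
    rwa [Real.norm_eq_abs] at hnorm
  nlinarith

private lemma deriv_contOn' (lam : ℝ → ℝ) (hlam : ContDiffOn ℝ 1 lam (Ioi 0)) :
    ContinuousOn (deriv lam) (Ioi 0) := by
  have h := hlam.continuousOn_derivWithin (uniqueDiffOn_Ioi 0) le_rfl
  exact h.congr fun x hx => (derivWithin_of_isOpen isOpen_Ioi hx).symm

private lemma lam_hasDerivAt' (lam : ℝ → ℝ) (hlam : ContDiffOn ℝ 1 lam (Ioi 0)) {x : ℝ}
    (hx : 0 < x) : HasDerivAt lam (deriv lam x) x :=
  ((hlam.contDiffAt (isOpen_Ioi.mem_nhds hx)).differentiableAt (by norm_num)).hasDerivAt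

end Helpers

/-- The finite-cylinder hodograph domain `Ω̄_c = {(s,t) : s ≥ 0, t ≥ 0, s+t ≥ c}`. -/
def OmegaC (c : ℝ) : Set (ℝ × ℝ) := {p : ℝ × ℝ | 0 ≤ p.1 ∧ 0 ≤ p.2 ∧ c ≤ p.1 + p.2}

/-- The boundary forcing term `𝒢(s,t)` built from the Cauchy–Goursat data
`{g, h, f, n}`. -/
noncomputable def Gbd (c : ℝ) (lam g h f n : ℝ → ℝ) (s t : ℝ) : ℝ :=
  (if s ≤ c then lam c * f s
    else 2 * lam s * g s - lam c * g c - ∫ σ in c..s, g σ * deriv lam σ)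
  + (if t ≤ c then lam c * f (c - t)
    else 2 * lam t * h t - lam c * h c - ∫ τ in c..t, h τ * deriv lam τ)
  + lam c * ∫ σ in (max (c - t) 0)..(min c s), n σ

/-- The operator `𝒜` of the Volterra formulation of the Cauchy–Goursat problem. -/
noncomputable def Aop (c : ℝ) (lam g h f n : ℝ → ℝ) (u : ℝ → ℝ → ℝ) (s t : ℝ) : ℝ :=
  (1 / (2 * lam (s + t))) * (Gbd c lam g h f n s t
    + (∫ σ in (max (c - t) 0)..s, deriv lam (σ + t) * u σ t)
    + (∫ τ in (max (c - s) 0)..t, deriv lam (s + τ) * u s τ))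

/-- The improvement property of `𝒜`: if `x₀` is continuous on `Ω̄_c`
and satisfies the Dirichlet data `{g, h, f}`, then `x₁ = 𝒜x₀` satisfies the same
Dirichlet data and, in addition, its normal difference quotient along the Cauchy
segment exists and equals `n(ξ)` for almost every `ξ ∈ (0,c)`. -/
theorem improvement_lemma
    (c : ℝ) (hc : 0 < c) (lam : ℝ → ℝ)
    (hlam : ContDiffOn ℝ 1 lam (Set.Ioi 0)) (hpos : ∀ u : ℝ, 0 < u → 0 < lam u)
    (g h f n : ℝ → ℝ)
    (hg : ContinuousOn g (Set.Ici c)) (hh : ContinuousOn h (Set.Ici c))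
    (hf : ∃ f' : ℝ → ℝ, IntegrableOn f' (Set.Icc 0 c) ∧
      ∀ ξ ∈ Set.Icc 0 c, f ξ = f 0 + ∫ σ in (0:ℝ)..ξ, f' σ)
    (hn : IntegrableOn n (Set.Icc 0 c))
    (hcorner₁ : g c = f c) (hcorner₂ : h c = f 0)
    (x₀ : ℝ → ℝ → ℝ)
    (hx₀ : ContinuousOn (fun p : ℝ × ℝ => x₀ p.1 p.2) (OmegaC c))
    (hD₁ : ∀ s : ℝ, c ≤ s → x₀ s 0 = g s)
    (hD₂ : ∀ t : ℝ, c ≤ t → x₀ 0 t = h t)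
    (hDC : ∀ s ∈ Set.Icc 0 c, x₀ s (c - s) = f s) :
    (∀ s : ℝ, c ≤ s → Aop c lam g h f n x₀ s 0 = g s) ∧
    (∀ t : ℝ, c ≤ t → Aop c lam g h f n x₀ 0 t = h t) ∧
    (∀ s ∈ Set.Icc 0 c, Aop c lam g h f n x₀ s (c - s) = f s) ∧
    (∀ᵐ ξ ∂(volume.restrict (Set.Ioo 0 c)),
      Filter.Tendsto
        (fun z => (Aop c lam g h f n x₀ (ξ + z) (c - ξ + z)
          - Aop c lam g h f n x₀ ξ (c - ξ)) / z)
        (nhdsWithin 0 (Set.Ioi 0)) (nhds (n ξ))) := by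
  have hlc : (0:ℝ) < lam c := hpos c hc
  have hlcne : lam c ≠ 0 := ne_of_gt hlc
  have part3 : ∀ s ∈ Set.Icc (0:ℝ) c, Aop c lam g h f n x₀ s (c - s) = f s := by
    intro s hs
    obtain ⟨hs0, hsc⟩ := hs
    have e1 : s + (c - s) = c := by ring
    have e2 : c - (c - s) = s := by ring
    rw [Aop, Gbd, e1, e2, if_pos hsc, if_pos (by linarith : c - s ≤ c),
      max_eq_left hs0, min_eq_right hsc, max_eq_left (by linarith : (0:ℝ) ≤ c - s),
      intervalIntegral.integral_same, intervalIntegral.integral_same,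
      intervalIntegral.integral_same]
    field_simp
    ring
  have part1 : ∀ s : ℝ, c ≤ s → Aop c lam g h f n x₀ s 0 = g s := by
    intro s hcs
    have hs0 : (0:ℝ) < s := lt_of_lt_of_le hc hcs
    have hgx : ∫ σ in c..s, deriv lam (σ + 0) * x₀ σ 0
        = ∫ σ in c..s, g σ * deriv lam σ := by
      apply intervalIntegral.integral_congr
      intro σ hσ
      rw [Set.uIcc_of_le hcs] at hσ
      simp only [add_zero]
      rw [hD₁ σ hσ.1, mul_comm]
    rw [Aop, Gbd, add_zero, sub_zero, max_eq_left hc.le, min_eq_left hcs,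
      max_eq_right (by linarith : c - s ≤ 0), intervalIntegral.integral_same,
      intervalIntegral.integral_same, hgx, if_pos hc.le]
    rcases eq_or_lt_of_le hcs with rfl | hlt
    · rw [if_pos le_rfl, intervalIntegral.integral_same, hcorner₁]
      field_simp; ring
    · rw [if_neg (not_le.mpr hlt), hcorner₁]
      have hls : lam s ≠ 0 := ne_of_gt (hpos s hs0)
      field_simp
      ring
  have part2 : ∀ t : ℝ, c ≤ t → Aop c lam g h f n x₀ 0 t = h t := by
    intro t hct
    have ht0 : (0:ℝ) < t := lt_of_lt_of_le hc hct
    have hhx : ∫ τ in c..t, deriv lam (0 + τ) * x₀ 0 τ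
        = ∫ τ in c..t, h τ * deriv lam τ := by
      apply intervalIntegral.integral_congr
      intro τ hτ
      rw [Set.uIcc_of_le hct] at hτ
      simp only [zero_add]
      rw [hD₂ τ hτ.1, mul_comm]
    rw [Aop, Gbd, zero_add, sub_zero, max_eq_left hc.le, min_eq_right hc.le,
      max_eq_right (by linarith : c - t ≤ 0), intervalIntegral.integral_same,
      intervalIntegral.integral_same, hhx, if_pos hc.le]
    rcases eq_or_lt_of_le hct with rfl | hlt
    · rw [if_pos le_rfl, intervalIntegral.integral_same, hcorner₂]
      have e : c - c = 0 := by ring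
      rw [e]
      field_simp; ring
    · rw [if_neg (not_le.mpr hlt), hcorner₂]
      have hls : lam t ≠ 0 := ne_of_gt (hpos t ht0)
      field_simp
      ring
  refine ⟨part1, part2, part3, ?_⟩
  obtain ⟨f', hf'int, hfrep⟩ := hf
  set F1 := (Set.Icc (0:ℝ) c).indicator f' with hF1def
  set F2 := (Set.Icc (0:ℝ) c).indicator n with hF2def
  have hF1i : Integrable F1 := hf'int.integrable_indicator measurableSet_Icc
  have hF2i : Integrable F2 := hn.integrable_indicator measurableSet_Icc
  have hII : ∀ a b : ℝ, 0 ≤ a → a ≤ b → b ≤ c → IntervalIntegrable f' volume a b :=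
    fun a b ha hab hbc => (hf'int.mono_set
      (by rw [Set.uIcc_of_le hab]; exact Set.Icc_subset_Icc ha hbc)).intervalIntegrable
  filter_upwards [ae_restrict_of_ae (ae_avg' F1 hF1i), ae_restrict_of_ae (ae_avg' F2 hF2i),
    ae_restrict_mem measurableSet_Ioo] with ξ hA1 hA2 hξmem
  obtain ⟨hξ0, hξc⟩ := hξmem
  set δ₀ := min ξ (c - ξ) with hδ₀def
  have hδ₀pos : (0:ℝ) < δ₀ := lt_min hξ0 (by linarith)
  have hδ₀ξ : δ₀ ≤ ξ := min_le_left _ _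
  have hδ₀c : δ₀ ≤ c - ξ := min_le_right _ _
  have hF2ξ : F2 ξ = n ξ := Set.indicator_of_mem (Set.mem_Icc.mpr ⟨hξ0.le, hξc.le⟩) n
  have hd_at : ContinuousAt (deriv lam) c :=
    (deriv_contOn' lam hlam).continuousAt (isOpen_Ioi.mem_nhds hc)
  -- the key pointwise identity
  have key : ∀ z ∈ Set.Ioo (0:ℝ) δ₀,
      (Aop c lam g h f n x₀ (ξ + z) (c - ξ + z) - Aop c lam g h f n x₀ ξ (c - ξ)) / z
      = (1/(2 * lam (c + 2*z))) *
        (lam c * ((∫ σ in ξ..(ξ+z), F1 σ)/z)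
          - lam c * ((∫ σ in (ξ-z)..ξ, F1 σ)/z)
          + lam c * ((∫ σ in (ξ-z)..(ξ+z), F2 σ)/z)
          + (∫ σ in (ξ-z)..(ξ+z), deriv lam (σ + (c - ξ + z)) * x₀ σ (c - ξ + z))/z
          + (∫ τ in (c-ξ-z)..(c-ξ+z), deriv lam ((ξ+z) + τ) * x₀ (ξ+z) τ)/z
          + ((lam c - lam (c + 2*z))/z) * (2 * f ξ)) := by
    intro z hz
    obtain ⟨hz0, hzδ⟩ := hz
    have hzξ : z < ξ := lt_of_lt_of_le hzδ hδ₀ξ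
    have hzc : z < c - ξ := lt_of_lt_of_le hzδ hδ₀c
    have hc2z : (0:ℝ) < c + 2*z := by linarith
    have hlne : lam (c + 2*z) ≠ 0 := ne_of_gt (hpos _ hc2z)
    have hzne : z ≠ 0 := ne_of_gt hz0
    have hAξ : Aop c lam g h f n x₀ ξ (c - ξ) = f ξ := part3 ξ (Set.mem_Icc.mpr ⟨hξ0.le, hξc.le⟩)
    have hfd1 : f (ξ+z) = f ξ + ∫ σ in ξ..(ξ+z), F1 σ := by
      have h1 : f (ξ+z) = f 0 + ∫ σ in (0:ℝ)..(ξ+z), f' σ :=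
        hfrep _ (Set.mem_Icc.mpr ⟨by linarith, by linarith⟩)
      have h2 : f ξ = f 0 + ∫ σ in (0:ℝ)..ξ, f' σ := hfrep _ (Set.mem_Icc.mpr ⟨by linarith, by linarith⟩)
      have h3 := intervalIntegral.integral_interval_sub_left
        (hII 0 (ξ+z) (le_refl (0:ℝ)) (by linarith) (by linarith))
        (hII 0 ξ (le_refl (0:ℝ)) (by linarith) (by linarith))
      have h4 : ∫ σ in ξ..(ξ+z), f' σ = ∫ σ in ξ..(ξ+z), F1 σ := by
        apply intervalIntegral.integral_congr
        intro σ hσ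
        rw [Set.uIcc_of_le (by linarith : ξ ≤ ξ + z)] at hσ
        exact (Set.indicator_of_mem (Set.mem_Icc.mpr ⟨by linarith [hσ.1], by linarith [hσ.2]⟩) f').symm
      rw [← h4]; rw [← h3]; rw [h1, h2]; ring
    have hfd2 : f (ξ-z) = f ξ - ∫ σ in (ξ-z)..ξ, F1 σ := by
      have h1 : f (ξ-z) = f 0 + ∫ σ in (0:ℝ)..(ξ-z), f' σ :=
        hfrep _ (Set.mem_Icc.mpr ⟨by linarith, by linarith⟩)
      have h2 : f ξ = f 0 + ∫ σ in (0:ℝ)..ξ, f' σ := hfrep _ (Set.mem_Icc.mpr ⟨by linarith, by linarith⟩)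
      have h4 : ∫ σ in (ξ-z)..ξ, f' σ = ∫ σ in (ξ-z)..ξ, F1 σ := by
        apply intervalIntegral.integral_congr
        intro σ hσ
        rw [Set.uIcc_of_le (by linarith : ξ - z ≤ ξ)] at hσ
        exact (Set.indicator_of_mem (Set.mem_Icc.mpr ⟨by linarith [hσ.1], by linarith [hσ.2]⟩) f').symm
      rw [← h4]
      have h5 : (∫ σ in (0:ℝ)..ξ, f' σ) - ∫ σ in (0:ℝ)..(ξ-z), f' σ
          = ∫ σ in (ξ-z)..ξ, f' σ := intervalIntegral.integral_interval_sub_left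
        (hII 0 ξ (le_refl (0:ℝ)) (by linarith) (by linarith))
        (hII 0 (ξ-z) (le_refl (0:ℝ)) (by linarith) (by linarith))
      rw [← h5, h1, h2]; ring
    have hnint : ∫ σ in (ξ-z)..(ξ+z), n σ = ∫ σ in (ξ-z)..(ξ+z), F2 σ := by
      apply intervalIntegral.integral_congr
      intro σ hσ
      rw [Set.uIcc_of_le (by linarith : ξ - z ≤ ξ + z)] at hσ
      exact (Set.indicator_of_mem (Set.mem_Icc.mpr ⟨by linarith [hσ.1], by linarith [hσ.2]⟩) n).symm
    have e1 : ξ + z + (c - ξ + z) = c + 2*z := by ring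
    have hmax1 : max (c - (c - ξ + z)) 0 = ξ - z := by
      rw [max_eq_left (by linarith : (0:ℝ) ≤ c - (c - ξ + z))]; ring
    have hmin : min c (ξ + z) = ξ + z := min_eq_right (by linarith)
    have hmax2 : max (c - (ξ + z)) 0 = c - ξ - z := by
      rw [max_eq_left (by linarith : (0:ℝ) ≤ c - (ξ + z))]; ring
    have e2 : c - (c - ξ + z) = ξ - z := by ring
    rw [hAξ, Aop, Gbd, e1, hmax1, hmin, hmax2, e2, if_pos (by linarith : ξ + z ≤ c),
      if_pos (by linarith : c - ξ + z ≤ c), hnint, hfd1, hfd2]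
    field_simp
    ring
  -- limit of the lam-difference quotient
  have hld : HasDerivAt lam (deriv lam c) c := lam_hasDerivAt' lam hlam hc
  have hin : HasDerivAt (fun z : ℝ => c + 2*z) (2:ℝ) 0 := by
    simpa using ((hasDerivAt_id (0:ℝ)).const_mul (2:ℝ)).const_add c
  have hcomp : HasDerivAt (fun z : ℝ => lam (c + 2*z)) (2 * deriv lam c) 0 := by
    have h0 : HasDerivAt lam (deriv lam c) ((fun z : ℝ => c + 2*z) 0) := by
      simpa using hld
    have := h0.comp 0 hin
    rw [mul_comm]
    exact this
  have T6 : Filter.Tendsto (fun z : ℝ => (lam c - lam (c + 2*z))/z)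
      (nhdsWithin 0 (Set.Ioi 0)) (nhds (-(2 * deriv lam c))) := by
    have hslope := hasDerivAt_iff_tendsto_slope.mp hcomp
    have h1 : Filter.Tendsto (fun z : ℝ => (lam (c + 2*z) - lam c)/z)
        (nhdsWithin 0 (Set.Ioi 0)) (nhds (2 * deriv lam c)) := by
      refine (hslope.mono_left (nhdsWithin_mono _ ?_)).congr' ?_
      · intro x hx
        exact ne_of_gt hx
      · filter_upwards [self_mem_nhdsWithin] with z hz
        have hz0 : z ≠ 0 := ne_of_gt hz
        rw [slope_def_field]
        rw [show c + 2*(0:ℝ) = c by norm_num, sub_zero]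
    have h2 := h1.neg
    refine h2.congr fun z => ?_
    rw [← neg_div, neg_sub]
  have hlamc2 : Filter.Tendsto (fun z : ℝ => lam (c + 2*z))
      (nhdsWithin 0 (Set.Ioi 0)) (nhds (lam c)) := by
    have hcont : ContinuousAt lam c := hlam.continuousOn.continuousAt (isOpen_Ioi.mem_nhds hc)
    have hm : Filter.Tendsto (fun z : ℝ => c + 2*z) (nhds (0:ℝ)) (nhds c) := by
      have hco : Continuous (fun z : ℝ => c + 2*z) := by fun_prop
      simpa using hco.tendsto 0
    exact (hcont.tendsto.comp hm).mono_left nhdsWithin_le_nhds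
  have T7 : Filter.Tendsto (fun z : ℝ => 1/(2 * lam (c + 2*z)))
      (nhdsWithin 0 (Set.Ioi 0)) (nhds (1/(2 * lam c))) :=
    Filter.Tendsto.div tendsto_const_nhds (hlamc2.const_mul 2) (by positivity)
  -- the two kernel-average limits
  have hval0 : x₀ ξ (c - ξ) = f ξ := hDC ξ (Set.mem_Icc.mpr ⟨hξ0.le, hξc.le⟩)
  have T4 : Filter.Tendsto
      (fun z => (∫ σ in (ξ-z)..(ξ+z), deriv lam (σ + (c - ξ + z)) * x₀ σ (c - ξ + z))/z)
      (nhdsWithin 0 (Set.Ioi 0)) (nhds (2 * (deriv lam c * f ξ))) := by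
    apply tendsto_avg_of_cwa' (fun σ z => deriv lam (σ + (c - ξ + z)) * x₀ σ (c - ξ + z))
      ξ (deriv lam c * f ξ) δ₀ hδ₀pos
    · -- continuity within the wedge
      have hf1 : ContinuousAt (fun p : ℝ × ℝ => deriv lam (p.1 + (c - ξ + p.2))) (ξ, 0) := by
        have hφ : Continuous (fun p : ℝ × ℝ => p.1 + (c - ξ + p.2)) := by fun_prop
        have h1 : ContinuousAt (deriv lam) ((fun p : ℝ × ℝ => p.1 + (c - ξ + p.2)) (ξ, 0)) := by
          simpa [show ξ + (c - ξ + 0) = c by ring] using hd_at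
        exact ContinuousAt.comp (x := ((ξ : ℝ), (0 : ℝ)))
          (f := fun p : ℝ × ℝ => p.1 + (c - ξ + p.2)) h1 hφ.continuousAt
      have hf2 : ContinuousWithinAt (fun p : ℝ × ℝ => x₀ p.1 (c - ξ + p.2))
          {p : ℝ × ℝ | |p.1 - ξ| ≤ p.2 ∧ p.2 ≤ δ₀} (ξ, 0) := by
        have hψ : Continuous (fun p : ℝ × ℝ => ((p.1, c - ξ + p.2) : ℝ × ℝ)) := by fun_prop
        have hmem : ((ξ, c - ξ) : ℝ × ℝ) ∈ OmegaC c := ⟨hξ0.le, by simp; linarith, by simp⟩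
        have hx0w : ContinuousWithinAt (fun p : ℝ × ℝ => x₀ p.1 p.2) (OmegaC c)
            ((fun p : ℝ × ℝ => ((p.1, c - ξ + p.2) : ℝ × ℝ)) (ξ, 0)) := by
          simpa using hx₀ _ hmem
        have hmaps : Set.MapsTo (fun p : ℝ × ℝ => ((p.1, c - ξ + p.2) : ℝ × ℝ))
            {p : ℝ × ℝ | |p.1 - ξ| ≤ p.2 ∧ p.2 ≤ δ₀} (OmegaC c) := by
          rintro ⟨a, b⟩ ⟨h1, h2⟩
          have hb : (0:ℝ) ≤ b := le_trans (abs_nonneg _) h1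
          obtain ⟨h3, h4⟩ := abs_le.mp h1
          refine ⟨by simp; linarith, by simp; linarith, by simp; linarith⟩
        exact ContinuousWithinAt.comp (x := ((ξ : ℝ), (0 : ℝ)))
          (f := fun p : ℝ × ℝ => ((p.1, c - ξ + p.2) : ℝ × ℝ)) hx0w hψ.continuousWithinAt hmaps
      have hcwa := (hf1.continuousWithinAt).mul hf2
      have hval : deriv lam (ξ + (c - ξ + 0)) * x₀ ξ (c - ξ + 0) = deriv lam c * f ξ := by
        rw [show ξ + (c - ξ + 0) = c by ring, show c - ξ + 0 = c - ξ by ring, hval0]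
      rw [← hval]
      exact hcwa
    · -- interval integrability of the slices
      intro z hz
      obtain ⟨hz0, hzδ⟩ := hz
      have hzξ : z < ξ := lt_of_lt_of_le hzδ hδ₀ξ
      have hzc : z < c - ξ := lt_of_lt_of_le hzδ hδ₀c
      apply ContinuousOn.intervalIntegrable
      rw [Set.uIcc_of_le (by linarith : ξ - z ≤ ξ + z)]
      apply ContinuousOn.mul
      · apply (deriv_contOn' lam hlam).comp
          ((by fun_prop : Continuous (fun σ : ℝ => σ + (c - ξ + z))).continuousOn)
        intro σ hσ
        obtain ⟨h1, h2⟩ := hσ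
        show (0:ℝ) < σ + (c - ξ + z)
        linarith
      · apply hx₀.comp
          ((by fun_prop : Continuous (fun σ : ℝ => ((σ, c - ξ + z) : ℝ × ℝ))).continuousOn)
        intro σ hσ
        obtain ⟨h1, h2⟩ := hσ
        exact ⟨by simp; linarith, by simp; linarith, by simp; linarith⟩
  have T5 : Filter.Tendsto
      (fun z => (∫ τ in (c-ξ-z)..(c-ξ+z), deriv lam ((ξ+z) + τ) * x₀ (ξ+z) τ)/z)
      (nhdsWithin 0 (Set.Ioi 0)) (nhds (2 * (deriv lam c * f ξ))) := by
    apply tendsto_avg_of_cwa' (fun τ z => deriv lam ((ξ+z) + τ) * x₀ (ξ+z) τ)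
      (c - ξ) (deriv lam c * f ξ) δ₀ hδ₀pos
    · have hf1 : ContinuousAt (fun p : ℝ × ℝ => deriv lam ((ξ + p.2) + p.1)) ((c - ξ), 0) := by
        have hφ : Continuous (fun p : ℝ × ℝ => (ξ + p.2) + p.1) := by fun_prop
        have h1 : ContinuousAt (deriv lam) ((fun p : ℝ × ℝ => (ξ + p.2) + p.1) ((c - ξ), 0)) := by
          simpa [show (ξ + 0) + (c - ξ) = c by ring] using hd_at
        exact ContinuousAt.comp (x := ((c - ξ : ℝ), (0 : ℝ)))
          (f := fun p : ℝ × ℝ => (ξ + p.2) + p.1) h1 hφ.continuousAt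
      have hf2 : ContinuousWithinAt (fun p : ℝ × ℝ => x₀ (ξ + p.2) p.1)
          {p : ℝ × ℝ | |p.1 - (c - ξ)| ≤ p.2 ∧ p.2 ≤ δ₀} ((c - ξ), 0) := by
        have hψ : Continuous (fun p : ℝ × ℝ => ((ξ + p.2, p.1) : ℝ × ℝ)) := by fun_prop
        have hmem : ((ξ, c - ξ) : ℝ × ℝ) ∈ OmegaC c := ⟨hξ0.le, by simp; linarith, by simp⟩
        have hx0w : ContinuousWithinAt (fun p : ℝ × ℝ => x₀ p.1 p.2) (OmegaC c)
            ((fun p : ℝ × ℝ => ((ξ + p.2, p.1) : ℝ × ℝ)) ((c - ξ), 0)) := by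
          simpa using hx₀ _ hmem
        have hmaps : Set.MapsTo (fun p : ℝ × ℝ => ((ξ + p.2, p.1) : ℝ × ℝ))
            {p : ℝ × ℝ | |p.1 - (c - ξ)| ≤ p.2 ∧ p.2 ≤ δ₀} (OmegaC c) := by
          rintro ⟨a, b⟩ ⟨h1, h2⟩
          have hb : (0:ℝ) ≤ b := le_trans (abs_nonneg _) h1
          obtain ⟨h3, h4⟩ := abs_le.mp h1
          refine ⟨by simp; linarith, by simp; linarith, by simp; linarith⟩
        exact ContinuousWithinAt.comp (x := ((c - ξ : ℝ), (0 : ℝ)))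
          (f := fun p : ℝ × ℝ => ((ξ + p.2, p.1) : ℝ × ℝ)) hx0w hψ.continuousWithinAt hmaps
      have hcwa := (hf1.continuousWithinAt).mul hf2
      have hval : deriv lam ((ξ + 0) + (c - ξ)) * x₀ (ξ + 0) (c - ξ) = deriv lam c * f ξ := by
        rw [show (ξ + 0) + (c - ξ) = c by ring, show ξ + 0 = ξ by ring, hval0]
      rw [← hval]
      exact hcwa
    · intro z hz
      obtain ⟨hz0, hzδ⟩ := hz
      have hzξ : z < ξ := lt_of_lt_of_le hzδ hδ₀ξ
      have hzc : z < c - ξ := lt_of_lt_of_le hzδ hδ₀c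
      apply ContinuousOn.intervalIntegrable
      rw [Set.uIcc_of_le (by linarith : c - ξ - z ≤ c - ξ + z)]
      apply ContinuousOn.mul
      · apply (deriv_contOn' lam hlam).comp
          ((by fun_prop : Continuous (fun τ : ℝ => (ξ + z) + τ)).continuousOn)
        intro τ hτ
        obtain ⟨h1, h2⟩ := hτ
        show (0:ℝ) < (ξ + z) + τ
        linarith
      · apply hx₀.comp
          ((by fun_prop : Continuous (fun τ : ℝ => ((ξ + z, τ) : ℝ × ℝ))).continuousOn)
        intro τ hτ
        obtain ⟨h1, h2⟩ := hτ
        exact ⟨by simp; linarith, by simp; linarith, by simp; linarith⟩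
  -- assemble
  have Tsum := T7.mul ((((((hA1.1.const_mul (lam c)).sub (hA1.2.1.const_mul (lam c))).add
      (hA2.2.2.const_mul (lam c))).add T4).add T5).add (T6.mul_const (2 * f ξ)))
  have hLval : (1/(2 * lam c)) *
      (lam c * F1 ξ - lam c * F1 ξ + lam c * (2 * F2 ξ) + 2 * (deriv lam c * f ξ)
        + 2 * (deriv lam c * f ξ) + -(2 * deriv lam c) * (2 * f ξ)) = n ξ := by
    rw [hF2ξ]
    field_simp
    ring
  rw [hLval] at Tsum
  refine Filter.Tendsto.congr' ?_ Tsum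
  filter_upwards [Ioo_mem_nhdsGT_of_mem (Set.left_mem_Ico.mpr hδ₀pos)] with z hz
  exact (key z hz).symm
end

section
/- Let S, T > 0, let M_H > 0, and let 𝓗 : (0,S]×(0,T] → ℝ be a measurable function with |𝓗(s,t)| ≤ M_H for all (s,t) in its domain. Let λ : [0, S+T] → ℝ be continuously differentiable with λ(0) = 0 and λ'(u) > 0 for all u ∈ [0, S+T]. Define f(s,t) = −(1/(2λ(s+t)))·∫₀^s ∫₀^t 𝓗(σ,τ) dτ dσ for (s,t) ∈ [0,S]×[0,T] with s+t > 0, and f(0,0) = 0. Then f is Lipschitz continuous on [0,S]×[0,T] and vanishes on the coordinate axes: f(s,0) = 0 for all s ∈ [0,S] and f(0,t) = 0 for all t ∈ [0,T]. -/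
open MeasureTheory

private lemma bdd_intervalIntegrable {g : ℝ → ℝ} (hg : Measurable g) {M : ℝ}
    (hb : ∀ x, |g x| ≤ M) (a b : ℝ) : IntervalIntegrable g volume a b := by
  rw [intervalIntegrable_iff]
  refine MeasureTheory.Integrable.mono' (g := fun _ => M)
    (integrableOn_const (C := M) measure_Ioc_lt_top.ne) hg.aestronglyMeasurable
    (Filter.Eventually.of_forall fun x => ?_)
  simpa [Real.norm_eq_abs] using hb x

set_option maxHeartbeats 1000000 in
/-- Regularity of the integrated forcing term: for a bounded measurable
residual `𝓗` and `λ` continuously differentiable with `λ(0) = 0` and `λ' > 0` on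
`[0, S+T]`, the forcing term
`f(s,t) = −(1/(2λ(s+t)))·∫₀^s ∫₀^t 𝓗(σ,τ) dτ dσ` (with `f(0,0) = 0`)
is Lipschitz continuous on `[0,S]×[0,T]` and vanishes on the coordinate axes. -/
theorem integrated_forcing_lipschitz
    (S T M_H : ℝ) (hS : 0 < S) (hT : 0 < T) (hM : 0 < M_H)
    (H : ℝ → ℝ → ℝ) (hHmeas : Measurable (fun p : ℝ × ℝ => H p.1 p.2))
    (hHbd : ∀ s ∈ Set.Ioc 0 S, ∀ t ∈ Set.Ioc 0 T, |H s t| ≤ M_H)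
    (lam : ℝ → ℝ) (hlam : ContDiff ℝ 1 lam) (h0 : lam 0 = 0)
    (hpos : ∀ u ∈ Set.Icc 0 (S + T), 0 < deriv lam u)
    (f : ℝ → ℝ → ℝ)
    (hfdef : ∀ s ∈ Set.Icc 0 S, ∀ t ∈ Set.Icc 0 T, 0 < s + t →
      f s t = -(1 / (2 * lam (s + t))) * ∫ σ in (0:ℝ)..s, ∫ τ in (0:ℝ)..t, H σ τ)
    (hf00 : f 0 0 = 0) :
    (∃ L : NNReal, LipschitzOnWith L (fun p : ℝ × ℝ => f p.1 p.2)
      (Set.Icc 0 S ×ˢ Set.Icc 0 T)) ∧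
    (∀ s ∈ Set.Icc (0:ℝ) S, f s 0 = 0) ∧ (∀ t ∈ Set.Icc (0:ℝ) T, f 0 t = 0) := by
  have hlamd : Differentiable ℝ lam := hlam.differentiable one_ne_zero
  have hderivc : Continuous (deriv lam) := hlam.continuous_deriv le_rfl
  have hIne : (Set.Icc (0:ℝ) (S + T)).Nonempty := ⟨0, le_rfl, by positivity⟩
  obtain ⟨u₀, hu₀, hmin⟩ := isCompact_Icc.exists_isMinOn hIne hderivc.continuousOn
  obtain ⟨u₁, hu₁, hmax⟩ := isCompact_Icc.exists_isMaxOn hIne hderivc.continuousOn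
  set c : ℝ := deriv lam u₀ with hc_def
  set C : ℝ := deriv lam u₁ with hC_def
  have hc : 0 < c := hpos u₀ hu₀
  have hcle : ∀ u ∈ Set.Icc (0:ℝ) (S + T), c ≤ deriv lam u := fun u hu =>
    isMinOn_iff.mp hmin u hu
  have hCle : ∀ u ∈ Set.Icc (0:ℝ) (S + T), deriv lam u ≤ C := fun u hu =>
    isMaxOn_iff.mp hmax u hu
  have hC : 0 < C := hc.trans_le (hcle u₁ hu₁)
  -- lower bound for lam
  have hlam_lb : ∀ u ∈ Set.Icc (0:ℝ) (S + T), c * u ≤ lam u := by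
    intro u hu
    have hd : ∀ x : ℝ, HasDerivAt (fun v => lam v - c * v) (deriv lam x - c) x := fun x =>
      ((hlamd x).hasDerivAt).sub (by simpa using (hasDerivAt_id x).const_mul c)
    have hmono : MonotoneOn (fun v => lam v - c * v) (Set.Icc 0 (S + T)) := by
      apply monotoneOn_of_deriv_nonneg (convex_Icc _ _)
      · exact (hlam.continuous.sub (continuous_const.mul continuous_id)).continuousOn
      · exact fun x _ => (hd x).differentiableAt.differentiableWithinAt
      · intro x hx
        rw [interior_Icc] at hx
        rw [(hd x).deriv]
        have := hcle x ⟨hx.1.le, hx.2.le⟩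
        linarith
    have h01 : (0:ℝ) ∈ Set.Icc (0:ℝ) (S + T) := ⟨le_rfl, by positivity⟩
    have := hmono h01 hu hu.1
    simp only [h0, mul_zero, sub_zero] at this
    linarith
  have hlam_pos : ∀ u ∈ Set.Icc (0:ℝ) (S + T), 0 < u → 0 < lam u := fun u hu h =>
    lt_of_lt_of_le (by positivity) (hlam_lb u hu)
  -- Lipschitz bound for lam
  have hlam_lip : ∀ u ∈ Set.Icc (0:ℝ) (S + T), ∀ v ∈ Set.Icc (0:ℝ) (S + T),
      |lam u - lam v| ≤ C * |u - v| := by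
    intro u hu v hv
    have := Convex.norm_image_sub_le_of_norm_deriv_le (f := lam)
      (fun x _ => hlamd x)
      (fun x hx => by
        rw [Real.norm_eq_abs, abs_of_pos (hpos x hx)]; exact hCle x hx)
      (convex_Icc _ _) hv hu
    simpa [Real.norm_eq_abs] using this
  -- truncated H
  set H' : ℝ → ℝ → ℝ :=
    fun σ τ => if (σ, τ) ∈ Set.Ioc (0:ℝ) S ×ˢ Set.Ioc (0:ℝ) T then H σ τ else 0 with hH'
  have hH'meas : Measurable (fun p : ℝ × ℝ => H' p.1 p.2) := by
    exact Measurable.ite (measurableSet_Ioc.prod measurableSet_Ioc) hHmeas measurable_const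
  have hH'bd : ∀ σ τ, |H' σ τ| ≤ M_H := by
    intro σ τ
    by_cases hm : (σ, τ) ∈ Set.Ioc (0:ℝ) S ×ˢ Set.Ioc (0:ℝ) T
    · simp only [hH', if_pos hm]; exact hHbd σ hm.1 τ hm.2
    · simp only [hH', if_neg hm, abs_zero]; exact hM.le
  have hH'measσ : ∀ σ, Measurable (H' σ) := fun σ => hH'meas.comp measurable_prodMk_left
  have hH'int : ∀ σ a b, IntervalIntegrable (H' σ) volume a b := fun σ a b =>
    bdd_intervalIntegrable (hH'measσ σ) (hH'bd σ) a b
  -- inner integral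
  set g : ℝ → ℝ → ℝ := fun σ t => ∫ τ in (0:ℝ)..t, H' σ τ with hgdef
  have hg_bd : ∀ σ t, |g σ t| ≤ M_H * |t| := by
    intro σ t
    have := intervalIntegral.norm_integral_le_of_norm_le_const (a := 0) (b := t)
      (C := M_H) (f := H' σ) (fun x _ => by simpa [Real.norm_eq_abs] using hH'bd σ x)
    simpa [Real.norm_eq_abs] using this
  have hg_lip : ∀ σ t₁ t₂, |g σ t₁ - g σ t₂| ≤ M_H * |t₁ - t₂| := by
    intro σ t₁ t₂
    have e : g σ t₁ - g σ t₂ = ∫ τ in t₂..t₁, H' σ τ :=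
      intervalIntegral.integral_interval_sub_left (hH'int σ 0 t₁) (hH'int σ 0 t₂)
    rw [e]
    have := intervalIntegral.norm_integral_le_of_norm_le_const (a := t₂) (b := t₁)
      (C := M_H) (f := H' σ) (fun x _ => by simpa [Real.norm_eq_abs] using hH'bd σ x)
    simpa [Real.norm_eq_abs] using this
  have hg_meas : ∀ t, 0 ≤ t → Measurable fun σ => g σ t := by
    intro t ht
    have : (fun σ => g σ t) = fun σ => ∫ τ in Set.Ioc (0:ℝ) t, H' σ τ :=
      funext fun σ => intervalIntegral.integral_of_le ht
    rw [this]
    exact (MeasureTheory.StronglyMeasurable.integral_prod_right (f := H')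
      (ν := volume.restrict (Set.Ioc (0:ℝ) t)) hH'meas.stronglyMeasurable).measurable
  have hg_int : ∀ t, 0 ≤ t → ∀ a b, IntervalIntegrable (fun σ => g σ t) volume a b :=
    fun t ht a b => bdd_intervalIntegrable (hg_meas t ht) (fun σ => hg_bd σ t) a b
  -- double integral
  set G : ℝ → ℝ → ℝ := fun s t => ∫ σ in (0:ℝ)..s, g σ t with hGdef
  have hG_bd : ∀ s t, |G s t| ≤ M_H * |t| * |s| := by
    intro s t
    have := intervalIntegral.norm_integral_le_of_norm_le_const (a := 0) (b := s)
      (C := M_H * |t|) (f := fun σ => g σ t)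
      (fun x _ => by simpa [Real.norm_eq_abs] using hg_bd x t)
    simpa [Real.norm_eq_abs] using this
  have hG_s : ∀ s₁ s₂ t, 0 ≤ t → |G s₁ t - G s₂ t| ≤ M_H * |t| * |s₁ - s₂| := by
    intro s₁ s₂ t ht
    have e : G s₁ t - G s₂ t = ∫ σ in s₂..s₁, g σ t :=
      intervalIntegral.integral_interval_sub_left (hg_int t ht 0 s₁) (hg_int t ht 0 s₂)
    rw [e]
    have := intervalIntegral.norm_integral_le_of_norm_le_const (a := s₂) (b := s₁)
      (C := M_H * |t|) (f := fun σ => g σ t)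
      (fun x _ => by simpa [Real.norm_eq_abs] using hg_bd x t)
    simpa [Real.norm_eq_abs] using this
  have hG_t : ∀ s t₁ t₂, 0 ≤ t₁ → 0 ≤ t₂ →
      |G s t₁ - G s t₂| ≤ M_H * |t₁ - t₂| * |s| := by
    intro s t₁ t₂ h1 h2
    have e : G s t₁ - G s t₂ = ∫ σ in (0:ℝ)..s, (g σ t₁ - g σ t₂) :=
      (intervalIntegral.integral_sub (hg_int t₁ h1 0 s) (hg_int t₂ h2 0 s)).symm
    rw [e]
    have := intervalIntegral.norm_integral_le_of_norm_le_const (a := 0) (b := s)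
      (C := M_H * |t₁ - t₂|) (f := fun σ => g σ t₁ - g σ t₂)
      (fun x _ => by simpa [Real.norm_eq_abs] using hg_lip x t₁ t₂)
    simpa [Real.norm_eq_abs] using this
  -- f in terms of G
  have hfG : ∀ s ∈ Set.Icc (0:ℝ) S, ∀ t ∈ Set.Icc (0:ℝ) T, 0 < s + t →
      f s t = -(1 / (2 * lam (s + t))) * G s t := by
    intro s hs t ht hst
    rw [hfdef s hs t ht hst]
    congr 1
    apply intervalIntegral.integral_congr_ae
    apply Filter.Eventually.of_forall
    intro σ hσ
    rw [Set.uIoc_of_le hs.1] at hσ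
    have hσ' : σ ∈ Set.Ioc (0:ℝ) S := ⟨hσ.1, hσ.2.trans hs.2⟩
    apply intervalIntegral.integral_congr_ae
    apply Filter.Eventually.of_forall
    intro τ hτ
    rw [Set.uIoc_of_le ht.1] at hτ
    have hτ' : τ ∈ Set.Ioc (0:ℝ) T := ⟨hτ.1, hτ.2.trans ht.2⟩
    simp only [hH', if_pos (Set.mk_mem_prod hσ' hτ')]
  -- axes
  have ax1 : ∀ s ∈ Set.Icc (0:ℝ) S, f s 0 = 0 := by
    intro s hs
    rcases eq_or_lt_of_le hs.1 with h | h
    · rw [← h]; exact hf00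
    · rw [hfdef s hs 0 ⟨le_rfl, hT.le⟩ (by linarith)]
      simp
  have ax2 : ∀ t ∈ Set.Icc (0:ℝ) T, f 0 t = 0 := by
    intro t ht
    rcases eq_or_lt_of_le ht.1 with h | h
    · rw [← h]; exact hf00
    · rw [hfdef 0 ⟨le_rfl, hS.le⟩ t ht (by linarith)]
      simp
  -- Lipschitz constant
  set Kv : ℝ := M_H / c + M_H * C / (c * c) with hKv
  have hKv0 : 0 ≤ Kv := by positivity
  have key : ∀ s₁ ∈ Set.Icc (0:ℝ) S, ∀ t₁ ∈ Set.Icc (0:ℝ) T,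
      ∀ s₂ ∈ Set.Icc (0:ℝ) S, ∀ t₂ ∈ Set.Icc (0:ℝ) T, s₁ + t₁ ≤ s₂ + t₂ →
      |f s₁ t₁ - f s₂ t₂| ≤ Kv * max |s₁ - s₂| |t₁ - t₂| := by
    intro s₁ hs₁ t₁ ht₁ s₂ hs₂ t₂ ht₂ hle
    set d : ℝ := max |s₁ - s₂| |t₁ - t₂| with hd
    have hd0 : 0 ≤ d := le_trans (abs_nonneg _) (le_max_left _ _)
    have hds : |s₁ - s₂| ≤ d := le_max_left _ _
    have hdt : |t₁ - t₂| ≤ d := le_max_right _ _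
    have hu₁0 : 0 ≤ s₁ + t₁ := add_nonneg hs₁.1 ht₁.1
    have hu₂0 : 0 ≤ s₂ + t₂ := add_nonneg hs₂.1 ht₂.1
    have hu₁m : s₁ + t₁ ∈ Set.Icc (0:ℝ) (S + T) := ⟨hu₁0, add_le_add hs₁.2 ht₁.2⟩
    have hu₂m : s₂ + t₂ ∈ Set.Icc (0:ℝ) (S + T) := ⟨hu₂0, add_le_add hs₂.2 ht₂.2⟩
    have hdu : |(s₁ + t₁) - (s₂ + t₂)| ≤ 2 * d := by
      calc |(s₁ + t₁) - (s₂ + t₂)| = |(s₁ - s₂) + (t₁ - t₂)| := by ring_nf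
        _ ≤ |s₁ - s₂| + |t₁ - t₂| := abs_add_le _ _
        _ ≤ 2 * d := by linarith
    rcases hu₁0.eq_or_lt with h1 | h1
    · -- s₁ = t₁ = 0
      have hs0 : s₁ = 0 := by linarith [hs₁.1, ht₁.1]
      have ht0 : t₁ = 0 := by linarith [hs₁.1, ht₁.1]
      rcases hu₂0.eq_or_lt with h2 | h2
      · have hs20 : s₂ = 0 := by linarith [hs₂.1, ht₂.1]
        have ht20 : t₂ = 0 := by linarith [hs₂.1, ht₂.1]
        rw [hs0, ht0, hs20, ht20, hf00, sub_self, abs_zero]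
        positivity
      · have hl2 : c * (s₂ + t₂) ≤ lam (s₂ + t₂) := hlam_lb _ hu₂m
        have hl2p : 0 < lam (s₂ + t₂) := hlam_pos _ hu₂m h2
        rw [hs0, ht0, hf00, hfG s₂ hs₂ t₂ ht₂ h2, zero_sub, abs_neg]
        have e2 : -(1 / (2 * lam (s₂ + t₂))) * G s₂ t₂ = -(G s₂ t₂ / (2 * lam (s₂ + t₂))) := by
          ring
        rw [e2, abs_neg, abs_div, abs_of_pos (by positivity : (0:ℝ) < 2 * lam (s₂ + t₂))]
        have hs2d : s₂ ≤ d := by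
          rw [hs0, zero_sub, abs_neg, abs_of_nonneg hs₂.1] at hds; exact hds
        have bg : |G s₂ t₂| ≤ M_H * (s₂ + t₂) * d := by
          calc |G s₂ t₂| ≤ M_H * |t₂| * |s₂| := hG_bd s₂ t₂
            _ = M_H * t₂ * s₂ := by rw [abs_of_nonneg ht₂.1, abs_of_nonneg hs₂.1]
            _ ≤ M_H * (s₂ + t₂) * d := by
                have k : t₂ * s₂ ≤ (s₂ + t₂) * d :=
                  mul_le_mul (by linarith [hs₂.1]) hs2d hs₂.1 (by linarith [hs₂.1, ht₂.1])
                linarith [mul_le_mul_of_nonneg_left k hM.le]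
        calc |G s₂ t₂| / (2 * lam (s₂ + t₂))
            ≤ (M_H * (s₂ + t₂) * d) / (2 * (c * (s₂ + t₂))) := by
              apply div_le_div₀ (by positivity) bg (by positivity) (by linarith)
          _ = M_H / (2 * c) * d := by
              field_simp
          _ ≤ Kv * d := by
              apply mul_le_mul_of_nonneg_right _ hd0
              rw [hKv]
              have h1' : M_H / (2 * c) ≤ M_H / c := by
                apply div_le_div_of_nonneg_left hM.le hc
                linarith
              have h2' : 0 ≤ M_H * C / (c * c) := by positivity
              linarith
    · -- main case : 0 < s₁+t₁ ≤ s₂+t₂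
      have h2 : 0 < s₂ + t₂ := lt_of_lt_of_le h1 hle
      have hl1 : c * (s₁ + t₁) ≤ lam (s₁ + t₁) := hlam_lb _ hu₁m
      have hl2 : c * (s₂ + t₂) ≤ lam (s₂ + t₂) := hlam_lb _ hu₂m
      have hl1p : 0 < lam (s₁ + t₁) := hlam_pos _ hu₁m h1
      have hl2p : 0 < lam (s₂ + t₂) := hlam_pos _ hu₂m h2
      have e : f s₁ t₁ - f s₂ t₂ =
          (G s₂ t₂ - G s₁ t₁) / (2 * lam (s₂ + t₂)) +
          G s₁ t₁ * (lam (s₁ + t₁) - lam (s₂ + t₂)) /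
            (2 * lam (s₁ + t₁) * lam (s₂ + t₂)) := by
        rw [hfG s₁ hs₁ t₁ ht₁ h1, hfG s₂ hs₂ t₂ ht₂ h2]
        field_simp
        ring
      have b1 : |G s₂ t₂ - G s₂ t₁| ≤ M_H * (s₂ + t₂) * d := by
        calc |G s₂ t₂ - G s₂ t₁| ≤ M_H * |t₂ - t₁| * |s₂| := hG_t s₂ t₂ t₁ ht₂.1 ht₁.1
          _ = M_H * |t₁ - t₂| * s₂ := by rw [abs_sub_comm, abs_of_nonneg hs₂.1]
          _ ≤ M_H * (s₂ + t₂) * d := by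
              have k : |t₁ - t₂| * s₂ ≤ d * (s₂ + t₂) :=
                mul_le_mul hdt (by linarith [ht₂.1]) hs₂.1 hd0
              linarith [mul_le_mul_of_nonneg_left k hM.le]
      have b2 : |G s₂ t₁ - G s₁ t₁| ≤ M_H * (s₂ + t₂) * d := by
        calc |G s₂ t₁ - G s₁ t₁| ≤ M_H * |t₁| * |s₂ - s₁| := hG_s s₂ s₁ t₁ ht₁.1
          _ = M_H * t₁ * |s₁ - s₂| := by rw [abs_of_nonneg ht₁.1, abs_sub_comm]
          _ ≤ M_H * (s₂ + t₂) * d := by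
              have k : t₁ * |s₁ - s₂| ≤ (s₂ + t₂) * d :=
                mul_le_mul (by linarith [hs₁.1, hle]) hds (abs_nonneg _) (by linarith [hs₂.1, ht₂.1])
              linarith [mul_le_mul_of_nonneg_left k hM.le]
      have hGdiff : |G s₂ t₂ - G s₁ t₁| ≤ 2 * M_H * (s₂ + t₂) * d := by
        calc |G s₂ t₂ - G s₁ t₁| ≤ |G s₂ t₂ - G s₂ t₁| + |G s₂ t₁ - G s₁ t₁| :=
              abs_sub_le _ _ _
          _ ≤ 2 * M_H * (s₂ + t₂) * d := by linarith
      have hA1 : |(G s₂ t₂ - G s₁ t₁) / (2 * lam (s₂ + t₂))| ≤ M_H / c * d := by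
        rw [abs_div, abs_of_pos (by positivity : (0:ℝ) < 2 * lam (s₂ + t₂))]
        calc |G s₂ t₂ - G s₁ t₁| / (2 * lam (s₂ + t₂))
            ≤ (2 * M_H * (s₂ + t₂) * d) / (2 * (c * (s₂ + t₂))) := by
              apply div_le_div₀ (by positivity) hGdiff (by positivity) (by linarith)
          _ = M_H / c * d := by field_simp
      have bG1 : |G s₁ t₁| ≤ M_H * (s₂ + t₂) * (s₁ + t₁) := by
        calc |G s₁ t₁| ≤ M_H * |t₁| * |s₁| := hG_bd s₁ t₁
          _ = M_H * t₁ * s₁ := by rw [abs_of_nonneg ht₁.1, abs_of_nonneg hs₁.1]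
          _ ≤ M_H * (s₂ + t₂) * (s₁ + t₁) := by
              have k : t₁ * s₁ ≤ (s₂ + t₂) * (s₁ + t₁) :=
                mul_le_mul (by linarith [hs₁.1, hle]) (by linarith [ht₁.1]) hs₁.1
                  (by linarith [hs₂.1, ht₂.1])
              linarith [mul_le_mul_of_nonneg_left k hM.le]
      have blam : |lam (s₁ + t₁) - lam (s₂ + t₂)| ≤ C * (2 * d) := by
        calc |lam (s₁ + t₁) - lam (s₂ + t₂)| ≤ C * |(s₁ + t₁) - (s₂ + t₂)| :=
              hlam_lip _ hu₁m _ hu₂m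
          _ ≤ C * (2 * d) := mul_le_mul_of_nonneg_left hdu hC.le
      have hA2 : |G s₁ t₁ * (lam (s₁ + t₁) - lam (s₂ + t₂)) /
          (2 * lam (s₁ + t₁) * lam (s₂ + t₂))| ≤ M_H * C / (c * c) * d := by
        rw [abs_div, abs_of_pos (by positivity : (0:ℝ) < 2 * lam (s₁ + t₁) * lam (s₂ + t₂)),
          abs_mul]
        have hnum : |G s₁ t₁| * |lam (s₁ + t₁) - lam (s₂ + t₂)| ≤
            (M_H * (s₂ + t₂) * (s₁ + t₁)) * (C * (2 * d)) :=
          mul_le_mul bG1 blam (abs_nonneg _) (by positivity)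
        calc |G s₁ t₁| * |lam (s₁ + t₁) - lam (s₂ + t₂)| /
              (2 * lam (s₁ + t₁) * lam (s₂ + t₂))
            ≤ ((M_H * (s₂ + t₂) * (s₁ + t₁)) * (C * (2 * d))) /
              (2 * (c * (s₁ + t₁)) * (c * (s₂ + t₂))) := by
              apply div_le_div₀ (by positivity) hnum (by positivity)
              have k := mul_le_mul hl1 hl2 (by positivity) hl1p.le
              linarith
          _ = M_H * C / (c * c) * d := by field_simp
      calc |f s₁ t₁ - f s₂ t₂|
          ≤ |(G s₂ t₂ - G s₁ t₁) / (2 * lam (s₂ + t₂))| +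
            |G s₁ t₁ * (lam (s₁ + t₁) - lam (s₂ + t₂)) /
              (2 * lam (s₁ + t₁) * lam (s₂ + t₂))| := by
              rw [e]; exact abs_add_le _ _
        _ ≤ M_H / c * d + M_H * C / (c * c) * d := add_le_add hA1 hA2
        _ = Kv * d := by rw [hKv]; ring
  refine ⟨⟨Real.toNNReal Kv, ?_⟩, ax1, ax2⟩
  rw [lipschitzOnWith_iff_dist_le_mul]
  intro p hp q hq
  simp only [Set.mem_prod] at hp hq
  rw [Prod.dist_eq, Real.dist_eq, Real.dist_eq, Real.dist_eq, Real.coe_toNNReal _ hKv0]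
  rcases le_total (p.1 + p.2) (q.1 + q.2) with h | h
  · exact key p.1 hp.1 p.2 hp.2 q.1 hq.1 q.2 hq.2 h
  · have := key q.1 hq.1 q.2 hq.2 p.1 hp.1 p.2 hp.2 h
    rw [abs_sub_comm]
    simpa [abs_sub_comm] using this
end

section
/- Let S, T > 0 and let λ : [0, S+T] → ℝ satisfy λ(0) = 0, λ continuously differentiable on [0, S+T] (one-sided derivatives at the endpoints), and λ'(u) > 0 for all u ∈ [0, S+T]. Let R = [0,S]×[0,T] and let C₀(R) denote the space of continuous functions on R vanishing on the axes s = 0 and t = 0. Then for every f ∈ C₀(R) there exists a unique x ∈ C₀(R) satisfying, for every (s,t) ∈ R with s + t > 0, the singular Volterra equation x(s,t) = f(s,t) + ∫₀^s (λ'(σ+t)/(2λ(s+t)))·x(σ,t) dσ + ∫₀^t (λ'(s+τ)/(2λ(s+t)))·x(s,τ) dτ. -/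
open Set MeasureTheory intervalIntegral

namespace Corrector

/-- clamp to `[0,S]` -/
noncomputable def cl (S a : ℝ) : ℝ := max 0 (min a S)

lemma cl_mem {S : ℝ} (hS : 0 ≤ S) (a : ℝ) : cl S a ∈ Icc 0 S := by
  constructor
  · exact le_max_left _ _
  · exact max_le hS (min_le_right _ _)

lemma cl_eq {S a : ℝ} (h : a ∈ Icc 0 S) : cl S a = a := by
  unfold cl
  rw [min_eq_left h.2, max_eq_right h.1]

lemma cl_cont (S : ℝ) : Continuous (cl S) :=
  continuous_const.max (continuous_id.min continuous_const)

lemma cl_zero {S : ℝ} (hS : 0 ≤ S) : cl S 0 = 0 := cl_eq ⟨le_rfl, hS⟩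

/-- FTC for shifted derivative integral. -/
lemma integral_deriv_shift {lam : ℝ → ℝ} (hlam : ContDiff ℝ 1 lam) (s t : ℝ) :
    (∫ σ in (0:ℝ)..s, deriv lam (σ + t)) = lam (s + t) - lam t := by
  rw [intervalIntegral.integral_comp_add_right (fun u => deriv lam u) t]
  rw [intervalIntegral.integral_deriv_eq_sub (fun x _ => (hlam.differentiable one_ne_zero).differentiableAt)
    (((hlam.continuous_deriv le_rfl).intervalIntegrable _ _))]
  norm_num




/-- the double-integral numerator -/
noncomputable def Hop (lam : ℝ → ℝ) (x : ℝ × ℝ → ℝ) (p : ℝ × ℝ) : ℝ :=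
  (∫ σ in (0:ℝ)..p.1, deriv lam (σ + p.2) * x (σ, p.2)) +
  (∫ τ in (0:ℝ)..p.2, deriv lam (p.1 + τ) * x (p.1, τ))

lemma lam_mono {S T : ℝ} {lam : ℝ → ℝ} (hlam : ContDiff ℝ 1 lam)
    (hpos : ∀ u ∈ Set.Icc 0 (S + T), 0 < deriv lam u)
    {a b : ℝ} (ha : 0 ≤ a) (hab : a ≤ b) (hb : b ≤ S + T) : lam a ≤ lam b := by
  have h : lam b - lam a = ∫ u in a..b, deriv lam u := by
    rw [intervalIntegral.integral_deriv_eq_sub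
      (fun x _ => (hlam.differentiable one_ne_zero).differentiableAt)
      ((hlam.continuous_deriv le_rfl).intervalIntegrable _ _)]
  have : (0:ℝ) ≤ ∫ u in a..b, deriv lam u := by
    apply intervalIntegral.integral_nonneg hab
    intro u hu
    exact (hpos u ⟨le_trans ha hu.1, le_trans hu.2 hb⟩).le
  linarith

/-- The key bound on `Hop`. -/
lemma Hop_bound {S T : ℝ} {lam : ℝ → ℝ} (hlam : ContDiff ℝ 1 lam)
    (hpos : ∀ u ∈ Set.Icc 0 (S + T), 0 < deriv lam u)
    {x : ℝ × ℝ → ℝ} (hx : Continuous x) {s t C : ℝ}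
    (hs : s ∈ Icc 0 S) (ht : t ∈ Icc 0 T)
    (hC1 : ∀ σ ∈ Icc 0 s, |x (σ, t)| ≤ C)
    (hC2 : ∀ τ ∈ Icc 0 t, |x (s, τ)| ≤ C) :
    |Hop lam x (s, t)| ≤ C * ((lam (s + t) - lam t) + (lam (s + t) - lam s)) := by
  have hdc : Continuous (deriv lam) := hlam.continuous_deriv le_rfl
  have key : ∀ (a : ℝ) (g : ℝ → ℝ), Continuous g → 0 ≤ a →
      (∀ u ∈ Icc 0 a, |g u| ≤ C) → (∀ u ∈ Icc 0 a, 0 ≤ deriv lam (u + t) ∨ True) → True := by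
    intro _ _ _ _ _ _; trivial
  -- bound the first integral
  have b1 : |∫ σ in (0:ℝ)..s, deriv lam (σ + t) * x (σ, t)| ≤ C * (lam (s + t) - lam t) := by
    have h1 : |∫ σ in (0:ℝ)..s, deriv lam (σ + t) * x (σ, t)|
        ≤ ∫ σ in (0:ℝ)..s, deriv lam (σ + t) * C := by
      apply intervalIntegral.abs_integral_le_integral_abs hs.1 |>.trans
      apply intervalIntegral.integral_mono_on hs.1
      · exact ((hdc.comp (continuous_id.add continuous_const)).mul
          (hx.comp (continuous_id.prodMk continuous_const))).abs.intervalIntegrable _ _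
      · exact ((hdc.comp (continuous_id.add continuous_const)).mul
          continuous_const).intervalIntegrable _ _
      · intro σ hσ
        have hd0 : 0 ≤ deriv lam (σ + t) :=
          (hpos _ ⟨by linarith [hσ.1, ht.1], by linarith [hσ.2, hs.2, ht.2]⟩).le
        rw [abs_mul, abs_of_nonneg hd0]
        exact mul_le_mul_of_nonneg_left (hC1 σ hσ) hd0
    rw [intervalIntegral.integral_mul_const, integral_deriv_shift hlam] at h1
    linarith [h1]
  have b2 : |∫ τ in (0:ℝ)..t, deriv lam (s + τ) * x (s, τ)| ≤ C * (lam (s + t) - lam s) := by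
    have h1 : |∫ τ in (0:ℝ)..t, deriv lam (s + τ) * x (s, τ)|
        ≤ ∫ τ in (0:ℝ)..t, deriv lam (s + τ) * C := by
      apply intervalIntegral.abs_integral_le_integral_abs ht.1 |>.trans
      apply intervalIntegral.integral_mono_on ht.1
      · exact ((hdc.comp (continuous_const.add continuous_id)).mul
          (hx.comp (continuous_const.prodMk continuous_id))).abs.intervalIntegrable _ _
      · exact ((hdc.comp (continuous_const.add continuous_id)).mul
          continuous_const).intervalIntegrable _ _
      · intro τ hτ
        have hd0 : 0 ≤ deriv lam (s + τ) :=
          (hpos _ ⟨by linarith [hτ.1, hs.1], by linarith [hτ.2, hs.2, ht.2]⟩).le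
        rw [abs_mul, abs_of_nonneg hd0]
        exact mul_le_mul_of_nonneg_left (hC2 τ hτ) hd0
    have h2 : (∫ τ in (0:ℝ)..t, deriv lam (s + τ) * C) = C * (lam (s + t) - lam s) := by
      rw [intervalIntegral.integral_mul_const]
      have : (∫ τ in (0:ℝ)..t, deriv lam (s + τ)) = lam (s + t) - lam s := by
        have := integral_deriv_shift hlam t s
        simp only [add_comm] at this ⊢
        rw [show (fun τ => deriv lam (s + τ)) = (fun τ => deriv lam (τ + s)) from
          funext fun τ => by rw [add_comm]] at *
        convert this using 2 <;> ring
      rw [this]; ring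
    linarith [h1.trans_eq h2]
  calc |Hop lam x (s, t)| ≤ |∫ σ in (0:ℝ)..s, deriv lam (σ + t) * x (σ, t)|
        + |∫ τ in (0:ℝ)..t, deriv lam (s + τ) * x (s, τ)| := abs_add_le _ _
    _ ≤ _ := by linarith

lemma Hop_cont {lam : ℝ → ℝ} (hlam : ContDiff ℝ 1 lam) {x : ℝ × ℝ → ℝ} (hx : Continuous x) :
    Continuous (Hop lam x) := by
  have hdc : Continuous (deriv lam) := hlam.continuous_deriv le_rfl
  apply Continuous.add
  · exact intervalIntegral.continuous_parametric_intervalIntegral_of_continuous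
      (by fun_prop) continuous_fst
  · exact intervalIntegral.continuous_parametric_intervalIntegral_of_continuous
      (by fun_prop) continuous_snd

/-- the full operator, with clamping built in -/
noncomputable def Phi (S T : ℝ) (lam : ℝ → ℝ) (f : ℝ → ℝ → ℝ) (x : ℝ × ℝ → ℝ)
    (p : ℝ × ℝ) : ℝ :=
  f (cl S p.1) (cl T p.2) +
    Hop lam x (cl S p.1, cl T p.2) / (2 * lam (cl S p.1 + cl T p.2))

lemma lam_pos {S T : ℝ} {lam : ℝ → ℝ} (hlam : ContDiff ℝ 1 lam)
    (hpos : ∀ u ∈ Set.Icc 0 (S + T), 0 < deriv lam u) (h0 : lam 0 = 0)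
    {v : ℝ} (h1 : 0 < v) (h2 : v ≤ S + T) : 0 < lam v := by
  have hft : lam v - lam 0 = ∫ u in (0:ℝ)..v, deriv lam u := by
    rw [intervalIntegral.integral_deriv_eq_sub
      (fun x _ => (hlam.differentiable one_ne_zero).differentiableAt)
      ((hlam.continuous_deriv le_rfl).intervalIntegrable _ _)]
  have : 0 < ∫ u in (0:ℝ)..v, deriv lam u := by
    apply intervalIntegral.intervalIntegral_pos_of_pos_on
      ((hlam.continuous_deriv le_rfl).intervalIntegrable _ _) _ h1
    intro u hu
    exact hpos u ⟨hu.1.le, hu.2.le.trans h2⟩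
  linarith

lemma lam_nonneg {S T : ℝ} {lam : ℝ → ℝ} (hlam : ContDiff ℝ 1 lam)
    (hpos : ∀ u ∈ Set.Icc 0 (S + T), 0 < deriv lam u) (h0 : lam 0 = 0)
    {v : ℝ} (h1 : 0 ≤ v) (h2 : v ≤ S + T) : 0 ≤ lam v := by
  rcases eq_or_lt_of_le h1 with h | h
  · rw [← h, h0]
  · exact (lam_pos hlam hpos h0 h h2).le

lemma Phi_cont {S T : ℝ} (hS : 0 < S) (hT : 0 < T) {lam : ℝ → ℝ}
    (hlam : ContDiff ℝ 1 lam) (h0 : lam 0 = 0)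
    (hpos : ∀ u ∈ Set.Icc 0 (S + T), 0 < deriv lam u)
    {f : ℝ → ℝ → ℝ}
    (hf : ContinuousOn (fun p : ℝ × ℝ => f p.1 p.2) (Set.Icc 0 S ×ˢ Set.Icc 0 T))
    (hf00 : f 0 0 = 0)
    {x : ℝ × ℝ → ℝ} (hx : Continuous x) (hx0 : x (0, 0) = 0) :
    Continuous (Phi S T lam f x) := by
  set K : Set (ℝ × ℝ) := Set.Icc 0 S ×ˢ Set.Icc 0 T with hK
  set G : ℝ × ℝ → ℝ := fun p => f p.1 p.2 + Hop lam x p / (2 * lam (p.1 + p.2)) with hG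
  have hGK : ContinuousOn G K := by
    intro p hp
    rcases hp with ⟨hp1, hp2⟩
    rcases eq_or_lt_of_le (by linarith [hp1.1, hp2.1] : (0:ℝ) ≤ p.1 + p.2) with hz | hz
    · -- origin case
      have hp10 : p.1 = 0 := by linarith [hp1.1, hp2.1]
      have hp20 : p.2 = 0 := by linarith [hp1.1, hp2.1]
      have hG0 : G p = 0 := by
        have : Hop lam x p = 0 := by
          simp [Hop, hp10, hp20, intervalIntegral.integral_same]
        simp [hG, this, hp10, hp20, hf00]
      rw [Metric.continuousWithinAt_iff]
      intro ε hε
      -- neighborhood where |x| is small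
      have hxc : ContinuousAt x (0, 0) := hx.continuousAt
      rw [Metric.continuousAt_iff] at hxc
      obtain ⟨δ₂, hδ₂, hx_small⟩ := hxc (ε / 4) (by linarith)
      -- neighborhood where |f| is small
      have hfc := hf p ⟨hp1, hp2⟩
      rw [Metric.continuousWithinAt_iff] at hfc
      obtain ⟨δ₁, hδ₁, hf_small⟩ := hfc (ε / 4) (by linarith)
      refine ⟨min δ₁ δ₂, lt_min hδ₁ hδ₂, ?_⟩
      rintro ⟨s, t⟩ ⟨hs, ht⟩ hdist
      have hs0 : 0 ≤ s := hs.1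
      have ht0 : 0 ≤ t := ht.1
      have hp00 : p = ((0:ℝ), (0:ℝ)) := Prod.ext hp10 hp20
      have hd2 : dist ((s, t) : ℝ × ℝ) ((0:ℝ), (0:ℝ)) < δ₂ := by
        rw [← hp00]; exact hdist.trans_le (min_le_right _ _)
      rw [Prod.dist_eq, Real.dist_eq, Real.dist_eq, sub_zero, sub_zero, max_lt_iff] at hd2
      have hds : |s| < δ₂ := hd2.1
      have hdt : |t| < δ₂ := hd2.2
      -- bound on x on relevant points
      have hxb1 : ∀ σ ∈ Icc 0 s, |x (σ, t)| ≤ ε / 4 := by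
        intro σ hσ
        have : dist (σ, t) ((0:ℝ), (0:ℝ)) < δ₂ := by
          rw [Prod.dist_eq, Real.dist_eq, Real.dist_eq]
          apply max_lt
          · rw [sub_zero, abs_of_nonneg hσ.1]
            exact lt_of_le_of_lt (hσ.2.trans (le_abs_self s)) hds
          · rw [sub_zero]; exact hdt
        have := hx_small this
        rw [hx0, Real.dist_eq, sub_zero] at this
        exact this.le
      have hxb2 : ∀ τ ∈ Icc 0 t, |x (s, τ)| ≤ ε / 4 := by
        intro τ hτ
        have : dist (s, τ) ((0:ℝ), (0:ℝ)) < δ₂ := by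
          rw [Prod.dist_eq, Real.dist_eq, Real.dist_eq]
          apply max_lt
          · rw [sub_zero]; exact hds
          · rw [sub_zero, abs_of_nonneg hτ.1]
            exact lt_of_le_of_lt (hτ.2.trans (le_abs_self t)) hdt
        have := hx_small this
        rw [hx0, Real.dist_eq, sub_zero] at this
        exact this.le
      have hHb : |Hop lam x (s, t)| ≤ ε / 4 * ((lam (s+t) - lam t) + (lam (s+t) - lam s)) :=
        Hop_bound hlam hpos hx hs ht hxb1 hxb2
      have hlt : lam t ≥ 0 := lam_nonneg hlam hpos h0 ht0 (by linarith [ht.2, hS.le])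
      have hls : lam s ≥ 0 := lam_nonneg hlam hpos h0 hs0 (by linarith [hs.2, hT.le])
      have hquot : |Hop lam x (s, t) / (2 * lam (s + t))| ≤ ε / 2 := by
        rcases eq_or_lt_of_le (lam_nonneg hlam hpos h0 (by linarith)
            (by linarith [hs.2, ht.2]) : 0 ≤ lam (s+t)) with hL | hL
        · rw [← hL]; norm_num; linarith
        · rw [abs_div, abs_of_pos (by linarith : (0:ℝ) < 2 * lam (s+t))]
          rw [div_le_iff₀ (by linarith)]
          calc |Hop lam x (s, t)| ≤ ε / 4 * ((lam (s+t) - lam t) + (lam (s+t) - lam s)) := hHb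
            _ ≤ ε / 2 * (2 * lam (s+t)) := by nlinarith
      have hfb : |f s t| < ε / 4 := by
        have := hf_small (Set.mem_prod.mpr ⟨hs, ht⟩) (hdist.trans_le (min_le_left _ _))
        rw [Real.dist_eq, hp10, hp20, hf00, sub_zero] at this
        exact this
      rw [hG0, Real.dist_eq, sub_zero]
      calc |G (s, t)| ≤ |f s t| + |Hop lam x (s, t) / (2 * lam (s + t))| := abs_add_le _ _
        _ < ε := by linarith
    · -- interior case: denominator nonzero
      have hLpos : 0 < lam (p.1 + p.2) :=
        lam_pos hlam hpos h0 hz (by linarith [hp1.2, hp2.2])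
      apply ContinuousWithinAt.add (hf ⟨p.1, p.2⟩ ⟨hp1, hp2⟩)
      apply ContinuousAt.continuousWithinAt
      exact ((Hop_cont hlam hx).continuousAt).div
        (by exact (continuous_const.mul ((hlam.continuous).comp
          (continuous_fst.add continuous_snd))).continuousAt)
        (by positivity)
  have : Phi S T lam f x = G ∘ (fun p : ℝ × ℝ => (cl S p.1, cl T p.2)) := rfl
  rw [this]
  apply hGK.comp_continuous ((cl_cont S).comp continuous_fst |>.prodMk
    ((cl_cont T).comp continuous_snd))
  intro p
  exact ⟨cl_mem hS.le _, cl_mem hT.le _⟩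

lemma quot_bound {S T : ℝ} {lam : ℝ → ℝ} (hlam : ContDiff ℝ 1 lam)
    (hpos : ∀ u ∈ Set.Icc 0 (S + T), 0 < deriv lam u) (h0 : lam 0 = 0)
    {x : ℝ × ℝ → ℝ} (hx : Continuous x) {s t C q : ℝ}
    (hs : s ∈ Icc 0 S) (ht : t ∈ Icc 0 T)
    (hC1 : ∀ σ ∈ Icc 0 s, |x (σ, t)| ≤ C)
    (hC2 : ∀ τ ∈ Icc 0 t, |x (s, τ)| ≤ C) (hC : 0 ≤ C) (hq0 : 0 ≤ q)
    (hq : 0 < s + t → 2 * lam (s + t) - lam s - lam t ≤ q * (2 * lam (s + t))) :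
    |Hop lam x (s, t) / (2 * lam (s + t))| ≤ C * q := by
  have hS0 : 0 ≤ S := hs.1.trans hs.2
  have hT0 : 0 ≤ T := ht.1.trans ht.2
  rcases eq_or_lt_of_le (by linarith [hs.1, ht.1] : (0:ℝ) ≤ s + t) with hz | hz
  · have hs0 : s = 0 := by linarith [hs.1, ht.1]
    have ht0 : t = 0 := by linarith [hs.1, ht.1]
    have : Hop lam x (s, t) = 0 := by
      simp [Hop, hs0, ht0, intervalIntegral.integral_same]
    rw [this, zero_div, abs_zero]
    positivity
  · have hL : 0 < lam (s + t) := lam_pos hlam hpos h0 hz (by linarith [hs.2, ht.2])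
    have hHb := Hop_bound hlam hpos hx hs ht hC1 hC2
    rw [abs_div, abs_of_pos (by linarith : (0:ℝ) < 2 * lam (s + t)), div_le_iff₀ (by linarith)]
    calc |Hop lam x (s, t)| ≤ C * ((lam (s+t) - lam t) + (lam (s+t) - lam s)) := hHb
      _ = C * (2 * lam (s + t) - lam s - lam t) := by ring
      _ ≤ C * (q * (2 * lam (s + t))) := mul_le_mul_of_nonneg_left (hq hz) hC
      _ = C * q * (2 * lam (s + t)) := by ring

lemma Phi_vanish₁ {S T : ℝ} (hS : 0 < S) (hT : 0 < T) {lam : ℝ → ℝ}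
    {f : ℝ → ℝ → ℝ} (hf₁ : ∀ s ∈ Set.Icc (0:ℝ) S, f s 0 = 0)
    {x : ℝ × ℝ → ℝ} (hx₁ : ∀ s, x (s, 0) = 0) (s : ℝ) :
    Phi S T lam f x (s, 0) = 0 := by
  have hcl : cl T 0 = 0 := cl_zero hT.le
  simp only [Phi, hcl]
  rw [hf₁ _ (cl_mem hS.le s)]
  have : Hop lam x (cl S s, 0) = 0 := by
    simp [Hop, hx₁, intervalIntegral.integral_same]
  rw [this]
  simp

lemma Phi_vanish₂ {S T : ℝ} (hS : 0 < S) (hT : 0 < T) {lam : ℝ → ℝ}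
    {f : ℝ → ℝ → ℝ} (hf₂ : ∀ t ∈ Set.Icc (0:ℝ) T, f 0 t = 0)
    {x : ℝ × ℝ → ℝ} (hx₂ : ∀ t, x (0, t) = 0) (t : ℝ) :
    Phi S T lam f x (0, t) = 0 := by
  have hcl : cl S 0 = 0 := cl_zero hS.le
  simp only [Phi, hcl]
  rw [hf₂ _ (cl_mem hT.le t)]
  have : Hop lam x (0, cl T t) = 0 := by
    simp [Hop, hx₂, intervalIntegral.integral_same]
  rw [this]
  simp

lemma Phi_clamp {S T : ℝ} (hS : 0 < S) (hT : 0 < T) {lam : ℝ → ℝ}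
    {f : ℝ → ℝ → ℝ} {x : ℝ × ℝ → ℝ} (p : ℝ × ℝ) :
    Phi S T lam f x p = Phi S T lam f x (cl S p.1, cl T p.2) := by
  simp only [Phi, cl_eq (cl_mem hS.le p.1), cl_eq (cl_mem hT.le p.2)]

lemma lam_bounds {S T : ℝ} {lam : ℝ → ℝ} (hlam : ContDiff ℝ 1 lam)
    {m M : ℝ} (hm : ∀ u ∈ Icc 0 (S+T), m ≤ deriv lam u)
    (hM : ∀ u ∈ Icc 0 (S+T), deriv lam u ≤ M)
    {v : ℝ} (hv : v ∈ Icc 0 (S+T)) : m * v ≤ lam v - lam 0 ∧ lam v - lam 0 ≤ M * v := by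
  have hdc : Continuous (deriv lam) := hlam.continuous_deriv le_rfl
  have hft : lam v - lam 0 = ∫ u in (0:ℝ)..v, deriv lam u := by
    rw [intervalIntegral.integral_deriv_eq_sub
      (fun x _ => (hlam.differentiable one_ne_zero).differentiableAt)
      (hdc.intervalIntegrable _ _)]
  constructor
  · have : (∫ u in (0:ℝ)..v, m) ≤ ∫ u in (0:ℝ)..v, deriv lam u := by
      apply intervalIntegral.integral_mono_on hv.1 (intervalIntegrable_const)
        (hdc.intervalIntegrable _ _)
      intro u hu; exact hm u ⟨hu.1, hu.2.trans hv.2⟩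
    rw [intervalIntegral.integral_const, smul_eq_mul, sub_zero] at this
    rw [hft]; linarith [this]
  · have : (∫ u in (0:ℝ)..v, deriv lam u) ≤ ∫ u in (0:ℝ)..v, M := by
      apply intervalIntegral.integral_mono_on hv.1 (hdc.intervalIntegrable _ _)
        intervalIntegrable_const
      intro u hu; exact hM u ⟨hu.1, hu.2.trans hv.2⟩
    rw [intervalIntegral.integral_const, smul_eq_mul, sub_zero] at this
    rw [hft]; linarith [this]

lemma Hop_sub {lam : ℝ → ℝ} (hlam : ContDiff ℝ 1 lam)
    {x y : ℝ × ℝ → ℝ} (hx : Continuous x) (hy : Continuous y) (p : ℝ × ℝ) :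
    Hop lam x p - Hop lam y p = Hop lam (fun q => x q - y q) p := by
  have hdc : Continuous (deriv lam) := hlam.continuous_deriv le_rfl
  unfold Hop
  have e1 : (∫ σ in (0:ℝ)..p.1, deriv lam (σ + p.2) * (x (σ, p.2) - y (σ, p.2)))
      = (∫ σ in (0:ℝ)..p.1, (deriv lam (σ + p.2) * x (σ, p.2) - deriv lam (σ + p.2) * y (σ, p.2))) :=
    intervalIntegral.integral_congr (fun σ _ => by ring)
  have e2 : (∫ τ in (0:ℝ)..p.2, deriv lam (p.1 + τ) * (x (p.1, τ) - y (p.1, τ)))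
      = (∫ τ in (0:ℝ)..p.2, (deriv lam (p.1 + τ) * x (p.1, τ) - deriv lam (p.1 + τ) * y (p.1, τ))) :=
    intervalIntegral.integral_congr (fun τ _ => by ring)
  have hi1 : IntervalIntegrable (fun σ => deriv lam (σ + p.2) * x (σ, p.2)) MeasureTheory.volume 0 p.1 :=
    (by fun_prop : Continuous fun σ => deriv lam (σ + p.2) * x (σ, p.2)).intervalIntegrable _ _
  have hi2 : IntervalIntegrable (fun σ => deriv lam (σ + p.2) * y (σ, p.2)) MeasureTheory.volume 0 p.1 :=
    (by fun_prop : Continuous fun σ => deriv lam (σ + p.2) * y (σ, p.2)).intervalIntegrable _ _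
  have hi3 : IntervalIntegrable (fun τ => deriv lam (p.1 + τ) * x (p.1, τ)) MeasureTheory.volume 0 p.2 :=
    (by fun_prop : Continuous fun τ => deriv lam (p.1 + τ) * x (p.1, τ)).intervalIntegrable _ _
  have hi4 : IntervalIntegrable (fun τ => deriv lam (p.1 + τ) * y (p.1, τ)) MeasureTheory.volume 0 p.2 :=
    (by fun_prop : Continuous fun τ => deriv lam (p.1 + τ) * y (p.1, τ)).intervalIntegrable _ _
  rw [e1, e2, intervalIntegral.integral_sub hi1 hi2, intervalIntegral.integral_sub hi3 hi4]
  ring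

lemma eq_form {lam : ℝ → ℝ} {x : ℝ × ℝ → ℝ} (s t c : ℝ) :
    Hop lam x (s, t) / c
      = (∫ σ in (0:ℝ)..s, deriv lam (σ + t) / c * x (σ, t))
        + (∫ τ in (0:ℝ)..t, deriv lam (s + τ) / c * x (s, τ)) := by
  unfold Hop
  rw [add_div]
  congr 1
  · rw [div_eq_mul_inv, ← intervalIntegral.integral_mul_const]
    exact (intervalIntegral.integral_congr (fun σ _ => by ring)).symm
  · rw [div_eq_mul_inv, ← intervalIntegral.integral_mul_const]
    exact (intervalIntegral.integral_congr (fun τ _ => by ring)).symm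


lemma Phi_eval {S T : ℝ} {lam : ℝ → ℝ} {f : ℝ → ℝ → ℝ} {x : ℝ × ℝ → ℝ} {s t : ℝ}
    (hs : s ∈ Icc 0 S) (ht : t ∈ Icc 0 T) :
    Phi S T lam f x (s, t) = f s t +
      ((∫ σ in (0:ℝ)..s, deriv lam (σ + t) / (2 * lam (s + t)) * x (σ, t)) +
       (∫ τ in (0:ℝ)..t, deriv lam (s + τ) / (2 * lam (s + t)) * x (s, τ))) := by
  show f (cl S s) (cl T t) + Hop lam x (cl S s, cl T t) / (2 * lam (cl S s + cl T t)) = _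
  rw [cl_eq hs, cl_eq ht, eq_form]

end Corrector


open Set MeasureTheory intervalIntegral Corrector

/-- Existence and uniqueness for the singular corrector Volterra
equation: for `λ` continuously differentiable on `[0, S+T]` with `λ(0) = 0` and
`λ' > 0`, and any continuous `f` on `R = [0,S]×[0,T]` vanishing on the axes,
there is a unique continuous `x` on `R` vanishing on the axes that satisfies
`x(s,t) = f(s,t) + ∫₀^s (λ'(σ+t)/(2λ(s+t)))·x(σ,t) dσ
       + ∫₀^t (λ'(s+τ)/(2λ(s+t)))·x(s,τ) dτ` whenever `s + t > 0`. -/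
theorem corrector_existence_uniqueness
    (S T : ℝ) (hS : 0 < S) (hT : 0 < T) (lam : ℝ → ℝ)
    (hlam : ContDiff ℝ 1 lam) (h0 : lam 0 = 0)
    (hpos : ∀ u ∈ Set.Icc 0 (S + T), 0 < deriv lam u)
    (f : ℝ → ℝ → ℝ)
    (hf : ContinuousOn (fun p : ℝ × ℝ => f p.1 p.2) (Set.Icc 0 S ×ˢ Set.Icc 0 T))
    (hf₁ : ∀ s ∈ Set.Icc (0:ℝ) S, f s 0 = 0)
    (hf₂ : ∀ t ∈ Set.Icc (0:ℝ) T, f 0 t = 0) :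
    ∃ x : ℝ → ℝ → ℝ,
      (ContinuousOn (fun p : ℝ × ℝ => x p.1 p.2) (Set.Icc 0 S ×ˢ Set.Icc 0 T) ∧
        (∀ s ∈ Set.Icc (0:ℝ) S, x s 0 = 0) ∧
        (∀ t ∈ Set.Icc (0:ℝ) T, x 0 t = 0) ∧
        ∀ s ∈ Set.Icc (0:ℝ) S, ∀ t ∈ Set.Icc (0:ℝ) T, 0 < s + t →
          x s t = f s t
            + (∫ σ in (0:ℝ)..s, deriv lam (σ + t) / (2 * lam (s + t)) * x σ t)
            + (∫ τ in (0:ℝ)..t, deriv lam (s + τ) / (2 * lam (s + t)) * x s τ)) ∧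
      ∀ y : ℝ → ℝ → ℝ,
        ContinuousOn (fun p : ℝ × ℝ => y p.1 p.2) (Set.Icc 0 S ×ˢ Set.Icc 0 T) →
        (∀ s ∈ Set.Icc (0:ℝ) S, y s 0 = 0) →
        (∀ t ∈ Set.Icc (0:ℝ) T, y 0 t = 0) →
        (∀ s ∈ Set.Icc (0:ℝ) S, ∀ t ∈ Set.Icc (0:ℝ) T, 0 < s + t →
          y s t = f s t
            + (∫ σ in (0:ℝ)..s, deriv lam (σ + t) / (2 * lam (s + t)) * y σ t)
            + (∫ τ in (0:ℝ)..t, deriv lam (s + τ) / (2 * lam (s + t)) * y s τ)) →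
        ∀ s ∈ Set.Icc (0:ℝ) S, ∀ t ∈ Set.Icc (0:ℝ) T, y s t = x s t := by
  classical
  have hdc : Continuous (deriv lam) := hlam.continuous_deriv le_rfl
  have hST : (0:ℝ) ≤ S + T := by linarith
  obtain ⟨um, humK, hum⟩ := isCompact_Icc.exists_isMinOn (Set.nonempty_Icc.mpr hST)
    hdc.continuousOn
  obtain ⟨uM, huMK, huM⟩ := isCompact_Icc.exists_isMaxOn (Set.nonempty_Icc.mpr hST)
    hdc.continuousOn
  set m := deriv lam um with hm_def
  set M := deriv lam uM with hM_def
  have hm0 : 0 < m := hpos um humK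
  have hmM : m ≤ M := hum huMK
  have hM0 : 0 < M := lt_of_lt_of_le hm0 hmM
  have hmle : ∀ u ∈ Set.Icc (0:ℝ) (S+T), m ≤ deriv lam u := fun u hu => hum hu
  have hMle : ∀ u ∈ Set.Icc (0:ℝ) (S+T), deriv lam u ≤ M := fun u hu => huM hu
  obtain ⟨q, hq_def⟩ : ∃ q : ℝ, q = 1 - m / (2 * M) := ⟨_, rfl⟩
  have hq0 : 0 ≤ q := by
    have h1 : m / (2*M) ≤ 1 := by rw [div_le_one (by linarith)]; linarith
    rw [hq_def]; linarith
  have hq1 : q < 1 := by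
    have h1 : 0 < m / (2*M) := by positivity
    rw [hq_def]; linarith
  -- key contraction inequality
  have hqkey : ∀ s ∈ Set.Icc (0:ℝ) S, ∀ t ∈ Set.Icc (0:ℝ) T, 0 < s + t →
      2 * lam (s+t) - lam s - lam t ≤ q * (2 * lam (s+t)) := by
    intro s hs t ht _
    have h1 := lam_bounds hlam hmle hMle
      (⟨hs.1, by linarith [hs.2, ht.1]⟩ : s ∈ Set.Icc 0 (S+T))
    have h2 := lam_bounds hlam hmle hMle
      (⟨ht.1, by linarith [ht.2, hs.1]⟩ : t ∈ Set.Icc 0 (S+T))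
    have h3 := lam_bounds hlam hmle hMle
      (⟨by linarith [hs.1, ht.1], by linarith [hs.2, ht.2]⟩ : s+t ∈ Set.Icc 0 (S+T))
    rw [h0, sub_zero] at h1 h2 h3
    have key : m / (2*M) * (2 * lam (s+t)) ≤ lam s + lam t := by
      have e1 : m / (2*M) * (2 * (M * (s+t))) = m * (s+t) := by field_simp
      have e2 : m / (2*M) * (2 * lam (s+t)) ≤ m / (2*M) * (2 * (M * (s+t))) := by
        apply mul_le_mul_of_nonneg_left (by linarith [h3.2]) (by positivity)
      have e3 : m * s ≤ lam s := h1.1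
      have e4 : m * t ≤ lam t := h2.1
      nlinarith
    have e5 : q * (2 * lam (s+t)) = 2 * lam (s+t) - m / (2*M) * (2 * lam (s+t)) := by
      rw [hq_def]; ring
    nlinarith [key, e5]
  have hf00 : f 0 0 = 0 := hf₁ 0 ⟨le_rfl, hS.le⟩
  obtain ⟨Bf, hBf⟩ := (isCompact_Icc.prod isCompact_Icc).exists_bound_of_continuousOn hf
  -- the closed subspace of bounded continuous functions
  set Xs : Set (BoundedContinuousFunction (ℝ × ℝ) ℝ) :=
    {x | (∀ a, x (a, 0) = 0) ∧ (∀ b, x (0, b) = 0) ∧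
      ∀ p : ℝ × ℝ, x p = x (cl S p.1, cl T p.2)} with hXs
  have hXsc : IsClosed Xs := by
    have hrw : Xs = (⋂ a : ℝ, {x : BoundedContinuousFunction (ℝ × ℝ) ℝ | x (a, 0) = 0}) ∩
        ((⋂ b : ℝ, {x : BoundedContinuousFunction (ℝ × ℝ) ℝ | x (0, b) = 0}) ∩
         (⋂ p : ℝ × ℝ, {x : BoundedContinuousFunction (ℝ × ℝ) ℝ |
            x p = x (cl S p.1, cl T p.2)})) := by
      ext x
      simp only [hXs, Set.mem_setOf_eq, Set.mem_inter_iff, Set.mem_iInter]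
    rw [hrw]
    exact (isClosed_iInter fun a => isClosed_eq
        (continuous_eval_const _) continuous_const).inter
      ((isClosed_iInter fun b => isClosed_eq
        (continuous_eval_const _) continuous_const).inter
       (isClosed_iInter fun p => isClosed_eq
        (continuous_eval_const _)
        (continuous_eval_const _)))
  haveI : CompleteSpace ↥Xs := hXsc.completeSpace_coe
  haveI : Nonempty ↥Xs := ⟨⟨0, by simp [hXs]⟩⟩
  -- pointwise bound for the operator output
  have hPhiBound : ∀ x : BoundedContinuousFunction (ℝ × ℝ) ℝ, ∀ p : ℝ × ℝ,
      ‖Phi S T lam f ⇑x p‖ ≤ Bf + ‖x‖ := by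
    intro x p
    have ha := cl_mem hS.le p.1
    have hb := cl_mem hT.le p.2
    have hquot : |Hop lam ⇑x (cl S p.1, cl T p.2) /
        (2 * lam (cl S p.1 + cl T p.2))| ≤ ‖x‖ * 1 := by
      apply quot_bound hlam hpos h0 x.continuous ha hb
      · intro σ _
        have := x.norm_coe_le_norm (σ, cl T p.2)
        rwa [Real.norm_eq_abs] at this
      · intro τ _
        have := x.norm_coe_le_norm (cl S p.1, τ)
        rwa [Real.norm_eq_abs] at this
      · exact norm_nonneg x
      · exact zero_le_one
      · intro hz
        have l1 : 0 ≤ lam (cl S p.1) := lam_nonneg hlam hpos h0 ha.1 (by linarith [ha.2, hT.le])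
        have l2 : 0 ≤ lam (cl T p.2) := lam_nonneg hlam hpos h0 hb.1 (by linarith [hb.2, hS.le])
        linarith
    have hfb : |f (cl S p.1) (cl T p.2)| ≤ Bf := by
      have := hBf (cl S p.1, cl T p.2) ⟨ha, hb⟩
      rwa [Real.norm_eq_abs] at this
    rw [Real.norm_eq_abs]
    calc |Phi S T lam f ⇑x p| ≤ |f (cl S p.1) (cl T p.2)| +
          |Hop lam ⇑x (cl S p.1, cl T p.2) / (2 * lam (cl S p.1 + cl T p.2))| := abs_add_le _ _
      _ ≤ Bf + ‖x‖ := by rw [mul_one] at hquot; linarith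
  -- the operator
  set Φop : ↥Xs → ↥Xs := fun x =>
    ⟨BoundedContinuousFunction.ofNormedAddCommGroup (Phi S T lam f ⇑x.1)
      (Phi_cont hS hT hlam h0 hpos hf hf00 x.1.continuous (x.2.1 0))
      (Bf + ‖x.1‖) (hPhiBound x.1),
     fun a => Phi_vanish₁ hS hT hf₁ x.2.1 a,
     fun b => Phi_vanish₂ hS hT hf₂ x.2.2.1 b,
     fun p => Phi_clamp hS hT p⟩ with hΦop
  have hΦcoe : ∀ x : ↥Xs, ∀ p : ℝ × ℝ, ((Φop x).1 : ℝ × ℝ → ℝ) p = Phi S T lam f ⇑x.1 p :=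
    fun x p => rfl
  -- contraction estimate
  have hdist : ∀ x y : ↥Xs, dist (Φop x) (Φop y) ≤ q * dist x y := by
    intro x y
    have hd0 : 0 ≤ q * dist x y := mul_nonneg hq0 dist_nonneg
    rw [Subtype.dist_eq, BoundedContinuousFunction.dist_le hd0]
    intro p
    have ha := cl_mem hS.le p.1
    have hb := cl_mem hT.le p.2
    have hsub : ((Φop x).1 : ℝ × ℝ → ℝ) p - ((Φop y).1 : ℝ × ℝ → ℝ) p
        = Hop lam (fun q' => x.1 q' - y.1 q') (cl S p.1, cl T p.2)
          / (2 * lam (cl S p.1 + cl T p.2)) := by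
      rw [hΦcoe, hΦcoe]
      show (f _ _ + Hop lam ⇑x.1 (cl S p.1, cl T p.2) / (2 * lam (cl S p.1 + cl T p.2)))
        - (f _ _ + Hop lam ⇑y.1 (cl S p.1, cl T p.2) / (2 * lam (cl S p.1 + cl T p.2))) = _
      rw [← Hop_sub hlam x.1.continuous y.1.continuous]
      ring
    have hC1 : ∀ σ ∈ Set.Icc (0:ℝ) (cl S p.1),
        |x.1 (σ, cl T p.2) - y.1 (σ, cl T p.2)| ≤ dist x.1 y.1 := by
      intro σ _
      have h := BoundedContinuousFunction.dist_coe_le_dist (f := x.1) (g := y.1) (σ, cl T p.2)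
      rwa [Real.dist_eq] at h
    have hC2 : ∀ τ ∈ Set.Icc (0:ℝ) (cl T p.2),
        |x.1 (cl S p.1, τ) - y.1 (cl S p.1, τ)| ≤ dist x.1 y.1 := by
      intro τ _
      have h := BoundedContinuousFunction.dist_coe_le_dist (f := x.1) (g := y.1) (cl S p.1, τ)
      rwa [Real.dist_eq] at h
    have hq' := quot_bound hlam hpos h0 (x := fun q' => x.1 q' - y.1 q') (x.1.continuous.sub y.1.continuous) ha hb hC1 hC2
      dist_nonneg hq0 (hqkey _ ha _ hb)
    rw [Real.dist_eq, hsub, Subtype.dist_eq]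
    linarith [hq']
  have hcw : ContractingWith ⟨q, hq0⟩ Φop := by
    constructor
    · exact_mod_cast hq1
    · exact LipschitzWith.of_dist_le_mul fun x y => hdist x y
  set xs := ContractingWith.fixedPoint Φop hcw with hxs
  have hfixx : Φop xs = xs := hcw.fixedPoint_isFixedPt
  have hval : ∀ p : ℝ × ℝ, Phi S T lam f ⇑xs.1 p = xs.1 p := by
    intro p
    conv_rhs => rw [← hfixx]
    rfl
  refine ⟨fun s t => xs.1 (s, t), ⟨?_, ?_, ?_, ?_⟩, ?_⟩
  · exact (xs.1.continuous.comp (continuous_fst.prodMk continuous_snd)).continuousOn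
  · exact fun s _ => xs.2.1 s
  · exact fun t _ => xs.2.2.1 t
  · intro s hs t ht _
    have h := hval (s, t)
    rw [Phi_eval hs ht] at h
    linarith [h]
  · intro y hy hy₁ hy₂ hyeq
    obtain ⟨By, hBy⟩ := (isCompact_Icc.prod isCompact_Icc).exists_bound_of_continuousOn hy
    have hclm : ∀ p : ℝ × ℝ,
        ((cl S p.1, cl T p.2) : ℝ × ℝ) ∈ Set.Icc (0:ℝ) S ×ˢ Set.Icc (0:ℝ) T :=
      fun p => ⟨cl_mem hS.le _, cl_mem hT.le _⟩
    have hyc : Continuous (fun p : ℝ × ℝ => y (cl S p.1) (cl T p.2)) := by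
      exact hy.comp_continuous (((cl_cont S).comp continuous_fst).prodMk
        ((cl_cont T).comp continuous_snd)) hclm
    set ybar : BoundedContinuousFunction (ℝ × ℝ) ℝ :=
      BoundedContinuousFunction.ofNormedAddCommGroup (fun p : ℝ × ℝ => y (cl S p.1) (cl T p.2))
        hyc By (fun p => hBy _ (hclm p)) with hybar
    have hymem : ybar ∈ Xs := by
      refine ⟨fun a => ?_, fun b => ?_, fun p => ?_⟩
      · show y (cl S a) (cl T 0) = 0
        rw [cl_zero hT.le]
        exact hy₁ _ (cl_mem hS.le a)
      · show y (cl S 0) (cl T b) = 0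
        rw [cl_zero hS.le]
        exact hy₂ _ (cl_mem hT.le b)
      · show y (cl S p.1) (cl T p.2) = y (cl S (cl S p.1)) (cl T (cl T p.2))
        rw [cl_eq (cl_mem hS.le p.1), cl_eq (cl_mem hT.le p.2)]
    have hyfix : Function.IsFixedPt Φop ⟨ybar, hymem⟩ := by
      apply Subtype.ext
      apply BoundedContinuousFunction.ext
      intro p
      show Phi S T lam f ⇑ybar p = y (cl S p.1) (cl T p.2)
      rw [Phi_clamp hS hT p]
      have ha := cl_mem hS.le p.1
      have hb := cl_mem hT.le p.2
      rcases eq_or_lt_of_le (by linarith [ha.1, hb.1] : (0:ℝ) ≤ cl S p.1 + cl T p.2)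
        with hz | hz
      · have ha0 : cl S p.1 = 0 := by linarith [ha.1, hb.1]
        have hb0 : cl T p.2 = 0 := by linarith [ha.1, hb.1]
        rw [ha0, hb0]
        show f (cl S 0) (cl T 0) + Hop lam ⇑ybar (cl S 0, cl T 0)
            / (2 * lam (cl S 0 + cl T 0)) = y 0 0
        rw [cl_zero hS.le, cl_zero hT.le]
        have hH : Hop lam ⇑ybar ((0:ℝ), (0:ℝ)) = 0 := by
          simp [Hop, intervalIntegral.integral_same]
        rw [hH, hf00, hy₁ 0 ⟨le_rfl, hS.le⟩]
        norm_num
      · rw [Phi_eval ha hb]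
        have e1 : (∫ σ in (0:ℝ)..(cl S p.1), deriv lam (σ + cl T p.2)
              / (2 * lam (cl S p.1 + cl T p.2)) * ybar (σ, cl T p.2))
            = ∫ σ in (0:ℝ)..(cl S p.1), deriv lam (σ + cl T p.2)
              / (2 * lam (cl S p.1 + cl T p.2)) * y σ (cl T p.2) := by
          apply intervalIntegral.integral_congr
          intro σ hσ
          rw [Set.uIcc_of_le ha.1] at hσ
          show deriv lam (σ + cl T p.2) / (2 * lam (cl S p.1 + cl T p.2))
            * y (cl S σ) (cl T (cl T p.2)) = _
          rw [cl_eq ⟨hσ.1, hσ.2.trans ha.2⟩, cl_eq (cl_mem hT.le p.2)]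
        have e2 : (∫ τ in (0:ℝ)..(cl T p.2), deriv lam (cl S p.1 + τ)
              / (2 * lam (cl S p.1 + cl T p.2)) * ybar (cl S p.1, τ))
            = ∫ τ in (0:ℝ)..(cl T p.2), deriv lam (cl S p.1 + τ)
              / (2 * lam (cl S p.1 + cl T p.2)) * y (cl S p.1) τ := by
          apply intervalIntegral.integral_congr
          intro τ hτ
          rw [Set.uIcc_of_le hb.1] at hτ
          show deriv lam (cl S p.1 + τ) / (2 * lam (cl S p.1 + cl T p.2))
            * y (cl S (cl S p.1)) (cl T τ) = _
          rw [cl_eq ⟨hτ.1, hτ.2.trans hb.2⟩, cl_eq (cl_mem hS.le p.1)]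
        rw [e1, e2]
        have h := hyeq _ ha _ hb hz
        linarith [h]
    have hyeqxs : (⟨ybar, hymem⟩ : ↥Xs) = xs := hcw.fixedPoint_unique hyfix
    intro s hs t ht
    have h1 : ybar (s, t) = y s t := by
      show y (cl S s) (cl T t) = y s t
      rw [cl_eq hs, cl_eq ht]
    have h2 : ⇑ybar = ⇑xs.1 := congrArg _ (congrArg Subtype.val hyeqxs)
    rw [← h1]
    rw [h2]
end

section
/- Let S, T > 0 and let λ : [0, S+T] → ℝ satisfy λ(0) = 0, λ continuously differentiable on [0, S+T], and λ'(u) > 0 for all u ∈ [0, S+T]. Define g(u) = λ(u)/u for u ∈ (0, S+T] and g(0) = λ'(0), and set m₀ = inf g and M = sup g over [0, S+T]. Then 0 < m₀ ≤ M < ∞, and for every (s,t) ∈ [0,S]×[0,T] with s + t > 0 one has ∫₀^s (λ'(σ+t)/(2λ(s+t))) dσ + ∫₀^t (λ'(s+τ)/(2λ(s+t))) dτ = 1 − (λ(s) + λ(t))/(2λ(s+t)) ≤ 1 − m₀/(2M) < 1. -/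
/-- The contraction estimate for the singular Volterra kernels: with
`g(u) = λ(u)/u` (`g(0) = λ'(0)`), `m₀ = inf g`, `M = sup g` over `[0, S+T]`, one
has `0 < m₀ ≤ M`, and for every `(s,t) ∈ [0,S]×[0,T]` with `s+t > 0`,
`∫₀^s λ'(σ+t)/(2λ(s+t)) dσ + ∫₀^t λ'(s+τ)/(2λ(s+t)) dτ
  = 1 − (λ(s)+λ(t))/(2λ(s+t)) ≤ 1 − m₀/(2M) < 1`. -/
theorem singular_kernel_contraction_estimate
    (S T : ℝ) (hS : 0 < S) (hT : 0 < T) (lam : ℝ → ℝ)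
    (hlam : ContDiff ℝ 1 lam) (h0 : lam 0 = 0)
    (hpos : ∀ u ∈ Set.Icc 0 (S + T), 0 < deriv lam u)
    (g : ℝ → ℝ) (hg : ∀ u : ℝ, g u = if u = 0 then deriv lam 0 else lam u / u)
    (m₀ M : ℝ)
    (hm₀ : m₀ = sInf (g '' Set.Icc 0 (S + T)))
    (hM : M = sSup (g '' Set.Icc 0 (S + T))) :
    0 < m₀ ∧ m₀ ≤ M ∧
    ∀ s ∈ Set.Icc (0:ℝ) S, ∀ t ∈ Set.Icc (0:ℝ) T, 0 < s + t →
      ((∫ σ in (0:ℝ)..s, deriv lam (σ + t) / (2 * lam (s + t)))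
          + (∫ τ in (0:ℝ)..t, deriv lam (s + τ) / (2 * lam (s + t)))
        = 1 - (lam s + lam t) / (2 * lam (s + t))) ∧
      1 - (lam s + lam t) / (2 * lam (s + t)) ≤ 1 - m₀ / (2 * M) ∧
      1 - m₀ / (2 * M) < 1 := by
  have hST : (0:ℝ) < S + T := by linarith
  have hdiff : Differentiable ℝ lam := hlam.differentiable one_ne_zero
  have hcd : Continuous (deriv lam) := hlam.continuous_deriv le_rfl
  -- lam is strictly monotone on [0, S+T]
  have hmono : StrictMonoOn lam (Set.Icc 0 (S + T)) := by
    apply strictMonoOn_of_deriv_pos (convex_Icc _ _) hdiff.continuous.continuousOn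
    intro x hx
    rw [interior_Icc] at hx
    exact hpos x ⟨le_of_lt hx.1, le_of_lt hx.2⟩
  have hlam_pos : ∀ u : ℝ, 0 < u → u ≤ S + T → 0 < lam u := by
    intro u hu hu'
    have := hmono (Set.left_mem_Icc.2 hST.le) ⟨hu.le, hu'⟩ hu
    rwa [h0] at this
  -- continuity of g
  have hcg : ContinuousOn g (Set.Icc 0 (S + T)) := by
    intro u hu
    rcases eq_or_ne u 0 with rfl | hu0
    · -- continuity at 0 via the derivative
      have hd0 : HasDerivAt lam (deriv lam 0) 0 := (hdiff 0).hasDerivAt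
      have hslope : Filter.Tendsto (fun x => lam x / x) (nhdsWithin 0 {(0:ℝ)}ᶜ)
          (nhds (deriv lam 0)) := by
        have := hasDerivAt_iff_tendsto_slope.1 hd0
        refine this.congr' ?_
        filter_upwards [self_mem_nhdsWithin] with x hx
        have hx' : x ≠ 0 := hx
        simp [slope, h0, hx', div_eq_inv_mul]
      have h1 : Filter.Tendsto g (nhdsWithin 0 {(0:ℝ)}ᶜ) (nhds (deriv lam 0)) := by
        refine hslope.congr' ?_
        filter_upwards [self_mem_nhdsWithin] with x hx
        have hx' : x ≠ 0 := hx
        rw [hg x, if_neg hx']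
      have h2 : Filter.Tendsto g (pure (0:ℝ)) (nhds (deriv lam 0)) := by
        have : g 0 = deriv lam 0 := by rw [hg 0, if_pos rfl]
        simpa [this] using (tendsto_pure_nhds g 0)
      have : Filter.Tendsto g (nhds 0) (nhds (deriv lam 0)) := by
        rw [← nhdsNE_sup_pure (0:ℝ)]
        exact Filter.Tendsto.sup h1 h2
      have : ContinuousAt g 0 := by
        rw [ContinuousAt, hg 0, if_pos rfl]; exact this
      exact this.continuousWithinAt
    · have : ContinuousAt g u := by
        have hev : ∀ᶠ x in nhds u, (fun x => lam x / x) x = g x := by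
          have : {x : ℝ | x ≠ 0} ∈ nhds u := isOpen_compl_singleton.mem_nhds hu0
          filter_upwards [this] with x hx
          rw [hg x, if_neg hx]
        exact ContinuousAt.congr ((hdiff.continuous.continuousAt).div continuousAt_id hu0) hev
      exact this.continuousWithinAt
  -- compact image
  have hKc : IsCompact (g '' Set.Icc 0 (S + T)) := isCompact_Icc.image_of_continuousOn hcg
  have hKne : (g '' Set.Icc 0 (S + T)).Nonempty :=
    ⟨g 0, Set.mem_image_of_mem g (Set.left_mem_Icc.2 hST.le)⟩
  have hgpos : ∀ u ∈ Set.Icc (0:ℝ) (S + T), 0 < g u := by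
    intro u hu
    rw [hg u]
    split_ifs with h
    · exact hpos 0 (Set.left_mem_Icc.2 hST.le)
    · have hu' : 0 < u := lt_of_le_of_ne hu.1 (Ne.symm h)
      exact div_pos (hlam_pos u hu' hu.2) hu'
  have hm₀pos : 0 < m₀ := by
    obtain ⟨u, hu, hgu⟩ := hKc.sInf_mem hKne
    rw [hm₀, ← hgu]
    exact hgpos u hu
  have hbddA : BddAbove (g '' Set.Icc 0 (S + T)) := hKc.bddAbove
  have hbddB : BddBelow (g '' Set.Icc 0 (S + T)) := hKc.bddBelow
  have hm₀M : m₀ ≤ M := by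
    rw [hm₀, hM]; exact csInf_le_csSup hKne hbddB hbddA
  have hMpos : 0 < M := lt_of_lt_of_le hm₀pos hm₀M
  -- pointwise bounds
  have hlow : ∀ u ∈ Set.Icc (0:ℝ) (S + T), m₀ * u ≤ lam u := by
    intro u hu
    rcases eq_or_ne u 0 with rfl | hu0
    · simp [h0]
    · have hu' : 0 < u := lt_of_le_of_ne hu.1 (Ne.symm hu0)
      have : m₀ ≤ g u := hm₀ ▸ csInf_le hbddB (Set.mem_image_of_mem g hu)
      rw [hg u, if_neg hu0] at this
      calc m₀ * u ≤ (lam u / u) * u := by nlinarith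
        _ = lam u := by field_simp
  have hhigh : ∀ u ∈ Set.Icc (0:ℝ) (S + T), lam u ≤ M * u := by
    intro u hu
    rcases eq_or_ne u 0 with rfl | hu0
    · simp [h0]
    · have hu' : 0 < u := lt_of_le_of_ne hu.1 (Ne.symm hu0)
      have : g u ≤ M := hM ▸ le_csSup hbddA (Set.mem_image_of_mem g hu)
      rw [hg u, if_neg hu0] at this
      calc lam u = (lam u / u) * u := by field_simp
        _ ≤ M * u := by nlinarith
  refine ⟨hm₀pos, hm₀M, ?_⟩
  intro s hs t ht hst
  have hsum_mem : s + t ∈ Set.Icc (0:ℝ) (S + T) := ⟨by linarith [hs.1, ht.1], by linarith [hs.2, ht.2]⟩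
  have hx : 0 < lam (s + t) := hlam_pos _ hst hsum_mem.2
  have hx2 : (2 * lam (s + t)) ≠ 0 := by positivity
  have hs_mem : s ∈ Set.Icc (0:ℝ) (S + T) := ⟨hs.1, by linarith [hs.2]⟩
  have ht_mem : t ∈ Set.Icc (0:ℝ) (S + T) := ⟨ht.1, by linarith [ht.2]⟩
  constructor
  · -- the computation of the integrals
    have hI1 : (∫ σ in (0:ℝ)..s, deriv lam (σ + t)) = lam (s + t) - lam t := by
      rw [intervalIntegral.integral_comp_add_right (fun x => deriv lam x) t]
      rw [intervalIntegral.integral_deriv_eq_sub (fun x _ => hdiff x)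
        (hcd.intervalIntegrable _ _)]
      simp
    have hI2 : (∫ τ in (0:ℝ)..t, deriv lam (s + τ)) = lam (s + t) - lam s := by
      have : (∫ τ in (0:ℝ)..t, deriv lam (s + τ)) = ∫ τ in (0:ℝ)..t, deriv lam (τ + s) := by
        congr 1; ext τ; rw [add_comm]
      rw [this, intervalIntegral.integral_comp_add_right (fun x => deriv lam x) s]
      rw [intervalIntegral.integral_deriv_eq_sub (fun x _ => hdiff x)
        (hcd.intervalIntegrable _ _)]
      rw [zero_add, add_comm s t]
    rw [intervalIntegral.integral_div, intervalIntegral.integral_div, hI1, hI2]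
    field_simp
    ring
  constructor
  · -- the key inequality
    have h1 : m₀ * (s + t) ≤ lam s + lam t := by
      have := hlow s hs_mem
      have := hlow t ht_mem
      nlinarith
    have h2 : lam (s + t) ≤ M * (s + t) := hhigh _ hsum_mem
    have key : m₀ / (2 * M) ≤ (lam s + lam t) / (2 * lam (s + t)) := by
      have hrw : m₀ / (2 * M) = m₀ * (s + t) / (2 * M * (s + t)) := by
        rw [mul_div_mul_right _ _ (ne_of_gt hst)]
      rw [hrw]
      apply div_le_div₀ (by nlinarith) h1 (by positivity) (by nlinarith)
    linarith
  · have : 0 < m₀ / (2 * M) := by positivity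
    linarith
end
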